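/- arXiv:1812.00247 — 4 statements merged into one kernel-verified Lean document; each statement's English description precedes it below -/
import Mathlib

section
/- Let L be an n-dimensional nilpotent Lie algebra with n ≥ 4 and dim L² = n−2. Then dim M(L) ≤ n−2. -/
open Module

/-- The derived subalgebra's underlying submodule is the linear span of brackets. -/
private lemma lcs_one_coe (K A : Type) [Field K] [LieRing A] [LieAlgebra K A] :
    ((LieModule.lowerCentralSeries K A A 1 : LieSubmodule K A A) : Submodule K A)
      = Submodule.span K {z : A | ∃ x y : A, ⁅x, y⁆ = z} := by
  rw [show (1:ℕ) = 0 + 1 from rfl, LieModule.lowerCentralSeries_succ,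
    LieModule.lowerCentralSeries_zero, LieIdeal.toLieSubalgebra_toSubmodule,
    LieSubmodule.lieIdeal_oper_eq_linear_span']
  congr 1
  ext z
  constructor
  · rintro ⟨x, -, y, -, rfl⟩; exact ⟨x, y, rfl⟩
  · rintro ⟨x, y, rfl⟩; exact ⟨x, LieSubmodule.mem_top _, y, LieSubmodule.mem_top _, rfl⟩

set_option maxHeartbeats 2000000 in
private theorem schur_aux (K F L : Type) [Field K] [LieRing F] [LieAlgebra K F]
    [LieRing L] [LieAlgebra K L] [FiniteDimensional K L] [LieModule.IsNilpotent L L]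
    (n : ℕ) (hn : Module.finrank K L = n) (hn4 : 4 ≤ n)
    (hm : Module.finrank K
      ↥((LieModule.lowerCentralSeries K L L 1 : LieSubmodule K L L) : Submodule K L) = n - 2)
    (π : F →ₗ⁅K⁆ L) (hπ : Function.Surjective π) :
    Module.finrank K
      (↥((π.ker ⊓ LieModule.lowerCentralSeries K F F 1 : LieIdeal K F) : Submodule K F) ⧸
        (Submodule.comap
          ((π.ker ⊓ LieModule.lowerCentralSeries K F F 1 : LieIdeal K F) : Submodule K F).subtype
          ((⁅π.ker, (⊤ : LieIdeal K F)⁆ : LieIdeal K F) : Submodule K F))) ≤ n - 2 := by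
  classical
  -- Abbreviations
  set R : LieIdeal K F := π.ker with hR
  set F2 : LieIdeal K F := LieModule.lowerCentralSeries K F F 1 with hF2
  set J : LieIdeal K F := ⁅R, (⊤ : LieIdeal K F)⁆ with hJ
  set Jsub : Submodule K F := ((J : LieIdeal K F) : Submodule K F) with hJsub
  set Psub : Submodule K F := ((R ⊓ F2 : LieIdeal K F) : Submodule K F) with hPsub
  set F2sub : Submodule K F := ((F2 : LieIdeal K F) : Submodule K F) with hF2sub
  set ℓs : ℕ → Submodule K L :=
    fun k => ((LieModule.lowerCentralSeries K L L k : LieSubmodule K L L) : Submodule K L)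
    with hℓs
  have hm' : finrank K ↥(ℓs 1) = n - 2 := hm
  -- the right inverse σ of π
  obtain ⟨σ, hσ0⟩ : ∃ σ : L →ₗ[K] F, π.toLinearMap ∘ₗ σ = LinearMap.id := by
    apply LinearMap.exists_rightInverse_of_surjective
    rw [LinearMap.range_eq_top]; exact hπ
  have hσ : ∀ x : L, π (σ x) = x := fun x => congrArg (fun f => f x) hσ0
  -- membership in J
  have hJmem : ∀ r f : F, π r = 0 → ⁅r, f⁆ ∈ Jsub := by
    intro r f hr
    exact (LieSubmodule.mem_toSubmodule _).mpr
      (LieSubmodule.lie_mem_lie (LieHom.mem_ker.mpr hr) (LieSubmodule.mem_top f))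
  have hJmem' : ∀ r f : F, π r = 0 → ⁅f, r⁆ ∈ Jsub := by
    intro r f hr
    rw [← lie_skew]
    exact Jsub.neg_mem (hJmem r f hr)
  -- the bilinear map β
  set β : L →ₗ[K] L →ₗ[K] (F ⧸ Jsub) :=
    LinearMap.mk₂ K (fun x y => Jsub.mkQ ⁅σ x, σ y⁆)
      (by intro m₁ m₂ y; rw [← map_add, ← add_lie, ← map_add])
      (by intro c m y; rw [← map_smul, ← smul_lie, ← map_smul])
      (by intro m y₁ y₂; rw [← map_add, ← lie_add, ← map_add])
      (by intro c m y; rw [← map_smul, ← lie_smul, ← map_smul]) with hβ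
  have hβapp : ∀ x y : L, β x y = Jsub.mkQ ⁅σ x, σ y⁆ := fun x y => rfl
  have hkey : ∀ f f' : F, Jsub.mkQ ⁅f, f'⁆ = β (π f) (π f') := by
    intro f f'
    rw [hβapp, Submodule.mkQ_apply, Submodule.mkQ_apply, Submodule.Quotient.eq]
    have hdiff : ⁅f, f'⁆ - ⁅σ (π f), σ (π f')⁆
        = ⁅f - σ (π f), f'⁆ + ⁅σ (π f), f' - σ (π f')⁆ := by
      simp only [sub_lie, lie_sub]; abel
    rw [hdiff]
    refine Jsub.add_mem (hJmem _ _ ?_) (hJmem' _ _ ?_) <;> simp [map_sub, hσ]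
  have halt : ∀ x : L, β x x = 0 := by
    intro x; rw [hβapp, lie_self, map_zero]
  have hskew : ∀ x y : L, β x y = - β y x := by
    intro x y
    rw [hβapp, hβapp, ← map_neg, ← lie_skew]
  have hP2 : ∀ a b y : L, β ⁅a, b⁆ y = β a ⁅b, y⁆ - β b ⁅a, y⁆ := by
    intro a b y
    have h1 : β ⁅a, b⁆ y = Jsub.mkQ ⁅⁅σ a, σ b⁆, σ y⁆ := by
      rw [hkey ⁅σ a, σ b⁆ (σ y)]
      rw [LieHom.map_lie, hσ, hσ, hσ]
    rw [h1, lie_lie, map_sub, hkey (σ a) ⁅σ b, σ y⁆, hkey (σ b) ⁅σ a, σ y⁆,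
      LieHom.map_lie, LieHom.map_lie, hσ, hσ, hσ]
  -- choice of complement basis e 0, e 1 of L²
  have hq2 : finrank K (L ⧸ ℓs 1) = 2 := by
    have h := Submodule.finrank_quotient_add_finrank (ℓs 1)
    rw [hm', hn] at h
    omega
  obtain ⟨e, he⟩ : ∃ e : Fin 2 → L, ∀ i,
      (ℓs 1).mkQ (e i) = (Module.finBasisOfFinrankEq K (L ⧸ ℓs 1) hq2) i := by
    choose e he using fun i => (ℓs 1).mkQ_surjective
      ((Module.finBasisOfFinrankEq K (L ⧸ ℓs 1) hq2) i)
    exact ⟨e, he⟩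
  have hdec : ∀ x : L, ∃ a b : K, ∃ u ∈ ℓs 1, x = a • e 0 + b • e 1 + u := by
    intro x
    set bQ := Module.finBasisOfFinrankEq K (L ⧸ ℓs 1) hq2 with hbQ
    set q := (ℓs 1).mkQ x with hq
    refine ⟨bQ.repr q 0, bQ.repr q 1,
      x - ((bQ.repr q 0) • e 0 + (bQ.repr q 1) • e 1), ?_, by abel⟩
    have hrepr : q = (bQ.repr q 0) • bQ 0 + (bQ.repr q 1) • bQ 1 := by
      conv_lhs => rw [← bQ.sum_repr q]
      rw [Fin.sum_univ_two]
    have : (ℓs 1).mkQ (x - ((bQ.repr q 0) • e 0 + (bQ.repr q 1) • e 1)) = 0 := by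
      rw [map_sub, map_add, map_smul, map_smul, he, he, ← hq, ← hrepr, sub_self]
    rwa [← LinearMap.mem_ker, Submodule.ker_mkQ] at this
  -- basic bracket membership lemmas for the lower central series of L
  have hmono : ∀ {j k : ℕ}, j ≤ k → ℓs k ≤ ℓs j := by
    intro j k hjk
    exact (LieSubmodule.toSubmodule_le_toSubmodule _ _).mpr
      (LieModule.antitone_lowerCentralSeries K L L hjk)
  have hbr : ∀ (x m : L) (k : ℕ), m ∈ ℓs k → ⁅x, m⁆ ∈ ℓs (k + 1) := by
    intro x m k hm2
    have h : ⁅x, m⁆ ∈ (⁅(⊤ : LieIdeal K L),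
        (LieModule.lowerCentralSeries K L L k : LieSubmodule K L L)⁆ : LieSubmodule K L L) :=
      LieSubmodule.lie_mem_lie (LieSubmodule.mem_top x) ((LieSubmodule.mem_toSubmodule _).mp hm2)
    rw [← LieModule.lowerCentralSeries_succ] at h
    exact (LieSubmodule.mem_toSubmodule _).mpr h
  have hbr' : ∀ (x m : L) (k : ℕ), m ∈ ℓs k → ⁅m, x⁆ ∈ ℓs (k + 1) := by
    intro x m k hm2
    rw [← lie_skew]
    exact (ℓs (k + 1)).neg_mem (hbr x m k hm2)
  set w₁ : L := ⁅e 0, e 1⁆ with hw₁def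
  have htop : ∀ z : L, z ∈ ℓs 0 := by
    intro z
    exact (LieSubmodule.mem_toSubmodule _).mpr
      (by rw [LieModule.lowerCentralSeries_zero]; exact LieSubmodule.mem_top z)
  have hw1mem : w₁ ∈ ℓs 1 := hbr (e 0) (e 1) 0 (htop _)
  have hspan1 : ℓs 1 = Submodule.span K {z : L | ∃ x y : L, ⁅x, y⁆ = z} := lcs_one_coe K L
  -- ℓ₁ ≤ span {w₁} ⊔ ℓ₂
  have hsub12 : ℓs 1 ≤ Submodule.span K {w₁} ⊔ ℓs 2 := by
    rw [hspan1]
    apply Submodule.span_le.mpr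
    rintro z ⟨x, y, rfl⟩
    set T := Submodule.span K {w₁} ⊔ ℓs 2 with hT
    have hW : ∀ i j : Fin 2, ⁅e i, e j⁆ ∈ T := by
      intro i j
      fin_cases i <;> fin_cases j
      · rw [lie_self]; exact T.zero_mem
      · exact (le_sup_left : Submodule.span K {w₁} ≤ T) (Submodule.mem_span_singleton_self w₁)
      · rw [← lie_skew]
        exact T.neg_mem
          ((le_sup_left : Submodule.span K {w₁} ≤ T) (Submodule.mem_span_singleton_self w₁))
      · rw [lie_self]; exact T.zero_mem
    obtain ⟨a₁, a₂, u, hu, rfl⟩ := hdec x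
    obtain ⟨b₁, b₂, v, hv, rfl⟩ := hdec y
    have hxe : ∀ j : Fin 2, ⁅a₁ • e 0 + a₂ • e 1 + u, e j⁆ ∈ T := by
      intro j
      rw [add_lie, add_lie, smul_lie, smul_lie]
      refine T.add_mem (T.add_mem (T.smul_mem _ (hW 0 j)) (T.smul_mem _ (hW 1 j))) ?_
      exact (le_sup_right : ℓs 2 ≤ T) (hbr' _ _ 1 hu)
    have hexp : ⁅a₁ • e 0 + a₂ • e 1 + u, b₁ • e 0 + b₂ • e 1 + v⁆
        = b₁ • ⁅a₁ • e 0 + a₂ • e 1 + u, e 0⁆ + b₂ • ⁅a₁ • e 0 + a₂ • e 1 + u, e 1⁆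
          + ⁅a₁ • e 0 + a₂ • e 1 + u, v⁆ := by
      rw [lie_add, lie_add, lie_smul, lie_smul]
    rw [hexp]
    refine T.add_mem (T.add_mem (T.smul_mem _ (hxe 0)) (T.smul_mem _ (hxe 1))) ?_
    exact (le_sup_right : ℓs 2 ≤ T) (hbr _ _ 1 hv)
  -- brackets of two elements of ℓ₁ lie in ℓ₃
  have h11 : ∀ u, u ∈ ℓs 1 → ∀ v, v ∈ ℓs 1 → ⁅u, v⁆ ∈ ℓs 3 := by
    intro u hu v hv
    rw [hspan1] at hu
    induction hu using Submodule.span_induction with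
    | mem z hz =>
      obtain ⟨a, b, rfl⟩ := hz
      rw [lie_lie]
      exact (ℓs 3).sub_mem (hbr _ _ 2 (hbr _ _ 1 hv)) (hbr _ _ 2 (hbr _ _ 1 hv))
    | zero => rw [zero_lie]; exact (ℓs 3).zero_mem
    | add x y hx hy ihx ihy => rw [add_lie]; exact (ℓs 3).add_mem ihx ihy
    | smul a x hx ihx => rw [smul_lie]; exact (ℓs 3).smul_mem a ihx
  -- nondegeneracy : not both ⁅e i, w₁⁆ vanish
  have hne : ¬(⁅e 0, w₁⁆ = 0 ∧ ⁅e 1, w₁⁆ = 0) := by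
    rintro ⟨h1, h2⟩
    have h23 : ℓs 2 ≤ ℓs 3 := by
      have hspan2 : ℓs 2 = Submodule.span K {m : L | ∃ x ∈ (⊤ : LieIdeal K L),
          ∃ nn ∈ (LieModule.lowerCentralSeries K L L 1 : LieSubmodule K L L), ⁅x, nn⁆ = m} := by
        show ((LieModule.lowerCentralSeries K L L 2 : LieSubmodule K L L) : Submodule K L) = _
        rw [show (2:ℕ) = 1 + 1 from rfl, LieModule.lowerCentralSeries_succ,
          LieIdeal.toLieSubalgebra_toSubmodule, LieSubmodule.lieIdeal_oper_eq_linear_span']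
      rw [hspan2]
      apply Submodule.span_le.mpr
      rintro z ⟨x, -, m0, hm0, rfl⟩
      have hm0' : m0 ∈ ℓs 1 := (LieSubmodule.mem_toSubmodule _).mpr hm0
      obtain ⟨s, hs, m2, hm2, rfl⟩ := Submodule.mem_sup.mp (hsub12 hm0')
      obtain ⟨α, rfl⟩ := Submodule.mem_span_singleton.mp hs
      rw [lie_add, lie_smul]
      refine (ℓs 3).add_mem ((ℓs 3).smul_mem _ ?_) (hbr _ _ 2 hm2)
      obtain ⟨c₁, c₂, u, hu, rfl⟩ := hdec x
      rw [add_lie, add_lie, smul_lie, smul_lie, h1, h2, smul_zero, smul_zero,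
        zero_add, zero_add]
      exact h11 u hu w₁ hw1mem
    have h23' : LieModule.lowerCentralSeries K L L 2 ≤ LieModule.lowerCentralSeries K L L 3 :=
      (LieSubmodule.toSubmodule_le_toSubmodule _ _).mp h23
    have hstab : ∀ k, LieModule.lowerCentralSeries K L L 2
        ≤ LieModule.lowerCentralSeries K L L (2 + k) := by
      intro k
      induction k with
      | zero => exact le_of_eq rfl
      | succ k ih =>
        refine le_trans h23' ?_
        have e3 : LieModule.lowerCentralSeries K L L 3
            = ⁅(⊤ : LieIdeal K L), LieModule.lowerCentralSeries K L L 2⁆ :=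
          LieModule.lowerCentralSeries_succ K L L 2
        have e4 : LieModule.lowerCentralSeries K L L (2 + (k + 1))
            = ⁅(⊤ : LieIdeal K L), LieModule.lowerCentralSeries K L L (2 + k)⁆ := by
          rw [show 2 + (k + 1) = (2 + k) + 1 by omega]
          exact LieModule.lowerCentralSeries_succ K L L (2 + k)
        rw [e3, e4]
        exact LieSubmodule.mono_lie_right _ ih
    obtain ⟨N, hN⟩ := LieModule.IsNilpotent.nilpotent K L L
    have hbot : LieModule.lowerCentralSeries K L L 2 = ⊥ := by
      have h1' := hstab N
      have h2' : LieModule.lowerCentralSeries K L L (2 + N)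
          ≤ LieModule.lowerCentralSeries K L L N :=
        LieModule.antitone_lowerCentralSeries K L L (by omega)
      rw [hN] at h2'
      exact le_bot_iff.mp (le_trans h1' h2')
    have hcoe2 : ℓs 2 = ⊥ := by
      show ((LieModule.lowerCentralSeries K L L 2 : LieSubmodule K L L) : Submodule K L) = ⊥
      rw [hbot, LieIdeal.toLieSubalgebra_toSubmodule, LieSubmodule.bot_toSubmodule]
    have hle : ℓs 1 ≤ Submodule.span K {w₁} := by
      refine le_trans hsub12 ?_
      rw [hcoe2, sup_bot_eq]
    haveI := FiniteDimensional.span_of_finite K (Set.finite_singleton w₁)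
    have hfr : finrank K ↥(ℓs 1) ≤ finrank K ↥(Submodule.span K {w₁}) :=
      Submodule.finrank_mono hle
    have hsing : finrank K ↥(Submodule.span K ({w₁} : Set L)) ≤ 1 := by
      by_cases hw : w₁ = 0
      · rw [hw, Submodule.span_zero_singleton, finrank_bot]; omega
      · rw [finrank_span_singleton hw]
    rw [hm'] at hfr
    omega
  -- the special elements u₁, u₂ and the map Ψ
  set u₁ : L := ⁅e 0, w₁⁆ with hu₁def
  set u₂ : L := ⁅e 1, w₁⁆ with hu₂def
  have hu₁mem : u₁ ∈ ℓs 1 := hmono (by omega) (hbr (e 0) w₁ 1 hw1mem)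
  have hu₂mem : u₂ ∈ ℓs 1 := hmono (by omega) (hbr (e 1) w₁ 1 hw1mem)
  set φ0 : K →ₗ[K] (F ⧸ Jsub) := LinearMap.toSpanSingleton K _ (β (e 0) (e 1)) with hφ0
  set φ1 : ↥(ℓs 1) →ₗ[K] (F ⧸ Jsub) := (β (e 0)).comp (ℓs 1).subtype with hφ1
  set φ2 : ↥(ℓs 1) →ₗ[K] (F ⧸ Jsub) := (β (e 1)).comp (ℓs 1).subtype with hφ2
  set Ψ : (K × (↥(ℓs 1) × ↥(ℓs 1))) →ₗ[K] (F ⧸ Jsub) := φ0.coprod (φ1.coprod φ2) with hΨ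
  set W : Submodule K (F ⧸ Jsub) := LinearMap.range Ψ with hW
  have hWe : β (e 0) (e 1) ∈ W := by
    refine ⟨(1, 0, 0), ?_⟩
    rw [hΨ, LinearMap.coprod_apply, LinearMap.coprod_apply, map_zero, map_zero,
      add_zero, add_zero, hφ0, LinearMap.toSpanSingleton_apply, one_smul]
  have hWei : ∀ i : Fin 2, ∀ y : L, y ∈ ℓs 1 → β (e i) y ∈ W := by
    intro i y hy
    fin_cases i
    · refine ⟨(0, ⟨y, hy⟩, 0), ?_⟩
      rw [hΨ, LinearMap.coprod_apply, LinearMap.coprod_apply, map_zero, map_zero,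
        zero_add, add_zero, hφ1, LinearMap.comp_apply, Submodule.coe_subtype]
      rfl
    · refine ⟨(0, 0, ⟨y, hy⟩), ?_⟩
      rw [hΨ, LinearMap.coprod_apply, LinearMap.coprod_apply, map_zero, map_zero,
        zero_add, zero_add, hφ2, LinearMap.comp_apply, Submodule.coe_subtype]
      rfl
  -- the key spanning claim
  have hS : ∀ d k : ℕ, LieModule.lowerCentralSeries K L L (k + d) = ⊥ →
      ∀ x ∈ ℓs 1, ∀ y ∈ ℓs k, β x y ∈ W := by
    intro d
    induction d with
    | zero =>
      intro k hk x hx y hy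
      have hy0 : y = 0 := by
        have hb : ℓs k = ⊥ := by
          show ((LieModule.lowerCentralSeries K L L k : LieSubmodule K L L) : Submodule K L) = ⊥
          rw [Nat.add_zero] at hk
          rw [hk, LieIdeal.toLieSubalgebra_toSubmodule, LieSubmodule.bot_toSubmodule]
        rw [hb] at hy
        simpa using hy
      rw [hy0, map_zero]
      exact W.zero_mem
    | succ d ih =>
      intro k hk x hx y hy
      have haux : ∀ a : L, ∀ z : L, z ∈ ℓs (k + 1) → β a z ∈ W := by
        intro a z hz
        obtain ⟨c₁, c₂, u, hu, rfl⟩ := hdec a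
        have hz1 : z ∈ ℓs 1 := hmono (by omega) hz
        have hexp : β (c₁ • e 0 + c₂ • e 1 + u) z
            = c₁ • β (e 0) z + c₂ • β (e 1) z + β u z := by
          rw [map_add, map_add, map_smul, map_smul, LinearMap.add_apply, LinearMap.add_apply,
            LinearMap.smul_apply, LinearMap.smul_apply]
        rw [hexp]
        refine W.add_mem (W.add_mem (W.smul_mem _ (hWei 0 z hz1))
          (W.smul_mem _ (hWei 1 z hz1))) ?_
        exact ih (k + 1) (by rw [show (k + 1) + d = k + (d + 1) by omega]; exact hk) u hu z hz
      rw [hspan1] at hx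
      induction hx using Submodule.span_induction with
      | mem z hz =>
        obtain ⟨a, b, rfl⟩ := hz
        rw [hP2 a b y]
        exact W.sub_mem (haux a ⁅b, y⁆ (hbr b y k hy)) (haux b ⁅a, y⁆ (hbr a y k hy))
      | zero => rw [map_zero, LinearMap.zero_apply]; exact W.zero_mem
      | add p q hp hq ihp ihq => rw [map_add, LinearMap.add_apply]; exact W.add_mem ihp ihq
      | smul c p hp ihp => rw [map_smul, LinearMap.smul_apply]; exact W.smul_mem c ihp
  obtain ⟨N0, hN0⟩ := LieModule.IsNilpotent.nilpotent K L L
  have hβℓ1 : ∀ x ∈ ℓs 1, ∀ y ∈ ℓs 1, β x y ∈ W := by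
    intro x hx y hy
    refine hS N0 1 ?_ x hx y hy
    have h2' : LieModule.lowerCentralSeries K L L (1 + N0)
        ≤ LieModule.lowerCentralSeries K L L N0 :=
      LieModule.antitone_lowerCentralSeries K L L (by omega)
    rw [hN0] at h2'
    exact le_bot_iff.mp h2'
  have hWee : ∀ i j : Fin 2, β (e i) (e j) ∈ W := by
    intro i j
    fin_cases i <;> fin_cases j
    · rw [halt]; exact W.zero_mem
    · exact hWe
    · rw [hskew]; exact W.neg_mem hWe
    · rw [halt]; exact W.zero_mem
  have hβei : ∀ i : Fin 2, ∀ x : L, β (e i) x ∈ W := by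
    intro i x
    obtain ⟨a, b, u, hu, rfl⟩ := hdec x
    have hexp : β (e i) (a • e 0 + b • e 1 + u)
        = a • β (e i) (e 0) + b • β (e i) (e 1) + β (e i) u := by
      rw [map_add, map_add, map_smul, map_smul]
    rw [hexp]
    exact W.add_mem (W.add_mem (W.smul_mem _ (hWee i 0)) (W.smul_mem _ (hWee i 1)))
      (hWei i u hu)
  have hβall : ∀ x y : L, β x y ∈ W := by
    intro x y
    obtain ⟨a, b, u, hu, rfl⟩ := hdec x
    have hexp : β (a • e 0 + b • e 1 + u) y
        = a • β (e 0) y + b • β (e 1) y + β u y := by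
      rw [map_add, map_add, map_smul, map_smul, LinearMap.add_apply, LinearMap.add_apply,
        LinearMap.smul_apply, LinearMap.smul_apply]
    rw [hexp]
    refine W.add_mem (W.add_mem (W.smul_mem _ (hβei 0 y)) (W.smul_mem _ (hβei 1 y))) ?_
    obtain ⟨c, d0, v, hv, rfl⟩ := hdec y
    have hexp2 : β u (c • e 0 + d0 • e 1 + v)
        = c • β u (e 0) + d0 • β u (e 1) + β u v := by
      rw [map_add, map_add, map_smul, map_smul]
    rw [hexp2]
    refine W.add_mem (W.add_mem (W.smul_mem _ ?_) (W.smul_mem _ ?_)) (hβℓ1 u hu v hv)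
    · rw [hskew]; exact W.neg_mem (hWei 0 u hu)
    · rw [hskew]; exact W.neg_mem (hWei 1 u hu)
  -- the projection pbar : F ⧸ Jsub → L
  have hJker : Jsub ≤ LinearMap.ker π.toLinearMap := by
    have h1 : J ≤ R := LieSubmodule.lie_le_left R ⊤
    have h2 : Jsub ≤ ((R : LieIdeal K F) : Submodule K F) :=
      (LieSubmodule.toSubmodule_le_toSubmodule _ _).mpr h1
    refine le_trans h2 ?_
    intro z hz
    rw [LinearMap.mem_ker]
    exact LieHom.mem_ker.mp ((LieSubmodule.mem_toSubmodule _).mp hz)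
  set pbar : (F ⧸ Jsub) →ₗ[K] L := Jsub.liftQ π.toLinearMap hJker with hpbar
  have hpmk : ∀ f : F, pbar (Jsub.mkQ f) = π f := by
    intro f
    rw [hpbar, Submodule.mkQ_apply, Submodule.liftQ_apply, LieHom.coe_toLinearMap]
  set M' : Submodule K (F ⧸ Jsub) := Submodule.map Jsub.mkQ Psub with hM'
  have hspanF : F2sub = Submodule.span K {z : F | ∃ x y : F, ⁅x, y⁆ = z} := lcs_one_coe K F
  have hDW : Submodule.map Jsub.mkQ F2sub ≤ W := by
    rw [hspanF, Submodule.map_span]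
    apply Submodule.span_le.mpr
    rintro _ ⟨z, ⟨a, b, rfl⟩, rfl⟩
    rw [hkey a b]
    exact hβall (π a) (π b)
  have hMW : M' ≤ W := by
    have hPF2 : Psub ≤ F2sub := (LieSubmodule.toSubmodule_le_toSubmodule _ _).mpr inf_le_right
    exact le_trans (Submodule.map_mono hPF2) hDW
  have hMker : M' ≤ LinearMap.ker pbar := by
    rw [hM', Submodule.map_le_iff_le_comap]
    intro z hz
    have hzR : z ∈ R := (LieSubmodule.mem_toSubmodule _).mp
      (((LieSubmodule.toSubmodule_le_toSubmodule _ _).mpr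
        (inf_le_left : R ⊓ F2 ≤ R)) hz)
    simp only [Submodule.mem_comap, LinearMap.mem_ker]
    rw [hpmk]
    exact LieHom.mem_ker.mp hzR
  have hmapW : ℓs 1 ≤ Submodule.map pbar W := by
    have hmapF2 : Submodule.map π.toLinearMap F2sub = ℓs 1 := by
      rw [hspanF, hspan1, Submodule.map_span]
      congr 1
      ext z
      constructor
      · rintro ⟨_, ⟨a, b, rfl⟩, rfl⟩
        exact ⟨π a, π b, by rw [LieHom.coe_toLinearMap, LieHom.map_lie]⟩
      · rintro ⟨x, y, rfl⟩
        obtain ⟨a, rfl⟩ := hπ x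
        obtain ⟨b, rfl⟩ := hπ y
        exact ⟨⁅a, b⁆, ⟨a, b, rfl⟩, by rw [LieHom.coe_toLinearMap, LieHom.map_lie]⟩
    calc ℓs 1 = Submodule.map π.toLinearMap F2sub := hmapF2.symm
      _ = Submodule.map pbar (Submodule.map Jsub.mkQ F2sub) := by
          rw [← Submodule.map_comp, hpbar, Submodule.liftQ_mkQ]
      _ ≤ Submodule.map pbar W := Submodule.map_mono hDW
  -- the relation and the kernel element
  have hrel : β (e 0) u₂ = β (e 1) u₁ := by
    have h := hP2 (e 0) (e 1) w₁
    have h1 : β (e 0) ⁅e 1, w₁⁆ - β (e 1) ⁅e 0, w₁⁆ = 0 := by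
      rw [← h]; exact halt w₁
    exact sub_eq_zero.mp h1
  set κ : K × (↥(ℓs 1) × ↥(ℓs 1)) := (0, (⟨u₂, hu₂mem⟩, -⟨u₁, hu₁mem⟩)) with hκdef
  have hκker : κ ∈ LinearMap.ker Ψ := by
    rw [LinearMap.mem_ker, hκdef, hΨ, LinearMap.coprod_apply, LinearMap.coprod_apply,
      map_zero, zero_add, map_neg, hφ1, hφ2, LinearMap.comp_apply,
      Submodule.coe_subtype]
    show (β (e 0)) u₂ + -((β (e 1)) u₁) = 0
    rw [hrel]
    exact add_neg_cancel _
  have hκ0 : κ ≠ 0 := by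
    intro hcontra
    apply hne
    rw [hκdef, Prod.ext_iff, Prod.ext_iff] at hcontra
    obtain ⟨-, hA, hB⟩ := hcontra
    constructor
    · have : (⟨u₁, hu₁mem⟩ : ↥(ℓs 1)) = 0 := neg_eq_zero.mp hB
      exact congrArg Subtype.val this
    · exact congrArg Subtype.val hA
  -- dimension count
  have hdom : finrank K (K × (↥(ℓs 1) × ↥(ℓs 1))) = 1 + ((n - 2) + (n - 2)) := by
    rw [Module.finrank_prod, Module.finrank_prod, Module.finrank_self, hm']
  have hrk1 := LinearMap.finrank_range_add_finrank_ker Ψ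
  have hker1 : 1 ≤ finrank K ↥(LinearMap.ker Ψ) := by
    rw [Nat.one_le_iff_ne_zero]
    intro h0
    have hbotk : LinearMap.ker Ψ = ⊥ := Submodule.finrank_eq_zero.mp h0
    rw [hbotk, Submodule.mem_bot] at hκker
    exact hκ0 hκker
  haveI hWfd : FiniteDimensional K ↥W := by
    rw [hW]; exact inferInstance
  set p' : ↥W →ₗ[K] L := pbar.comp W.subtype with hp'
  have hrk2 := LinearMap.finrank_range_add_finrank_ker p'
  have hrangep' : LinearMap.range p' = Submodule.map pbar W := by
    rw [hp', LinearMap.range_comp, Submodule.range_subtype]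
  have hge : n - 2 ≤ finrank K ↥(LinearMap.range p') := by
    rw [hrangep']
    have hh := Submodule.finrank_mono hmapW
    rwa [hm'] at hh
  have hMkerp' : Submodule.comap W.subtype M' ≤ LinearMap.ker p' := by
    intro z hz
    rw [LinearMap.mem_ker, hp', LinearMap.comp_apply]
    exact LinearMap.mem_ker.mp (hMker (Submodule.mem_comap.mp hz))
  have hfrM' : finrank K ↥M' ≤ finrank K ↥(LinearMap.ker p') := by
    have he2 : finrank K ↥(Submodule.comap W.subtype M') = finrank K ↥M' :=
      (Submodule.comapSubtypeEquivOfLe hMW).finrank_eq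
    rw [← he2]
    exact Submodule.finrank_mono hMkerp'
  have hWrange : finrank K ↥(LinearMap.range Ψ) = finrank K ↥W := by rw [hW]
  have hfin : finrank K ↥M' ≤ n - 2 := by omega
  -- identify the statement's quotient with M'
  have hqid : finrank K (↥Psub ⧸ Submodule.comap Psub.subtype Jsub) = finrank K ↥M' := by
    have hker : LinearMap.ker (Jsub.mkQ ∘ₗ Psub.subtype) = Submodule.comap Psub.subtype Jsub := by
      rw [LinearMap.ker_comp, Submodule.ker_mkQ]
    rw [← hker]
    have heq := (LinearMap.quotKerEquivRange (Jsub.mkQ ∘ₗ Psub.subtype)).finrank_eq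
    have hrg : LinearMap.range (Jsub.mkQ ∘ₗ Psub.subtype) = Submodule.map Jsub.mkQ Psub := by
      rw [LinearMap.range_comp, Submodule.range_subtype]
    rw [heq, hrg]
  rw [hqid]
  exact hfin

/-- The dimension of the Schur multiplier `M(L) = (R ∩ F²)/[R,F]` of a Lie algebra `L`,
computed from a free presentation `π : FreeLieAlgebra K X → L` (with `R = ker π` and
`F² = [F,F]`). -/
noncomputable def lieSchurMultiplierDim (K : Type) [Field K] (X : Type) {L : Type}
    [LieRing L] [LieAlgebra K L] (π : FreeLieAlgebra K X →ₗ⁅K⁆ L) : ℕ :=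
  let F := FreeLieAlgebra K X
  let R : LieIdeal K F := π.ker
  let F2 : LieIdeal K F := LieModule.lowerCentralSeries K F F 1
  Module.finrank K
    (↥((R ⊓ F2 : LieIdeal K F) : Submodule K F) ⧸
      (Submodule.comap ((R ⊓ F2 : LieIdeal K F) : Submodule K F).subtype
        ((⁅R, (⊤ : LieIdeal K F)⁆ : LieIdeal K F) : Submodule K F)))

/-- The dimension of the derived subalgebra `L² = [L,L]`. -/
noncomputable def lieDerivedDim (K : Type) [Field K] (L : Type) [LieRing L]
    [LieAlgebra K L] : ℕ :=
  Module.finrank K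
    ↥((LieModule.lowerCentralSeries K L L 1 : LieSubmodule K L L) : Submodule K L)


/-- if `L` is an `n`-dimensional nilpotent Lie algebra with `n ≥ 4` and
`dim L² = n − 2`, then `dim M(L) ≤ n − 2`. -/
theorem schur_multiplier_le_of_derived_codim_two (K L : Type) [Field K] [LieRing L]
    [LieAlgebra K L] [FiniteDimensional K L] [LieModule.IsNilpotent L L] (n : ℕ)
    (hn : Module.finrank K L = n) (hn4 : 4 ≤ n) (hm : lieDerivedDim K L = n - 2) :
    ∀ (X : Type) (π : FreeLieAlgebra K X →ₗ⁅K⁆ L), Function.Surjective π →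
      lieSchurMultiplierDim K X π ≤ n - 2 := by
  intro X π hπ
  exact schur_aux K (FreeLieAlgebra K X) L n hn hn4 hm π hπ
end

section
/- Let L be a finite-dimensional non-abelian nilpotent Lie algebra. Then the exterior center Z^∧(L) is contained in the derived subalgebra L². -/
open Module

/-- The exterior center `Z^∧(L)` of `L`, computed from a free presentation
`π : F → L`:  `x ∈ Z^∧(L)` iff `x ∧ y = 0` in `L ∧ L ≅ F²/[R,F]` for all `y ∈ L`,
i.e. the bracket of any lift of `x` with any element of `F` lies in `[R,F]`. -/
def lieExteriorCenter (K : Type) [Field K] (X : Type) {L : Type}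
    [LieRing L] [LieAlgebra K L] (π : FreeLieAlgebra K X →ₗ⁅K⁆ L) : Set L :=
  {x : L | ∀ a : FreeLieAlgebra K X, π a = x → ∀ b : FreeLieAlgebra K X,
    ⁅a, b⁆ ∈ (⁅π.ker, (⊤ : LieIdeal K (FreeLieAlgebra K X))⁆ :
      LieIdeal K (FreeLieAlgebra K X))}


section CE

variable (K L : Type) [Field K] [LieRing L] [LieAlgebra K L]

/-- The quotient of `L` by its derived subalgebra. -/
abbrev DerQuot : Type :=
  L ⧸ ((LieModule.lowerCentralSeries K L L 1 : LieSubmodule K L L) : Submodule K L)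

/-- The quotient map `L → L/L²` as a linear map. -/
noncomputable def dmk : L →ₗ[K] DerQuot K L :=
  Submodule.mkQ _

lemma dmk_lie (u v : L) : dmk K L ⁅u, v⁆ = 0 := by
  rw [dmk, Submodule.mkQ_apply, Submodule.Quotient.mk_eq_zero]
  have : ⁅u, v⁆ ∈ (LieModule.lowerCentralSeries K L L 1 : LieSubmodule K L L) := by
    rw [LieModule.lowerCentralSeries_succ, LieModule.lowerCentralSeries_zero]
    exact LieSubmodule.lie_mem_lie (LieSubmodule.mem_top u) (LieSubmodule.mem_top v)
  exact this

variable (α β : Module.Dual K (DerQuot K L))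

/-- The 2-cocycle used for our central extension. -/
noncomputable def ceCocycle (u v : L) : K :=
  α (dmk K L u) * β (dmk K L v) - α (dmk K L v) * β (dmk K L u)

lemma ceCocycle_lie_left (u v w : L) : ceCocycle K L α β ⁅u, v⁆ w = 0 := by
  simp [ceCocycle, dmk_lie]

lemma ceCocycle_lie_right (u v w : L) : ceCocycle K L α β u ⁅v, w⁆ = 0 := by
  simp [ceCocycle, dmk_lie]

/-- The central extension of `L` by `K` determined by the cocycle. -/
@[nolint unusedArguments]
def CExt (_α _β : Module.Dual K (DerQuot K L)) : Type := L × K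

namespace CExt

instance : AddCommGroup (CExt K L α β) := inferInstanceAs (AddCommGroup (L × K))
instance : Module K (CExt K L α β) := inferInstanceAs (Module K (L × K))

lemma fst_add' (u v : CExt K L α β) : (u + v).1 = u.1 + v.1 := rfl
lemma fst_smul' (t : K) (u : CExt K L α β) : (t • u).1 = t • u.1 := rfl

noncomputable instance : LieRing (CExt K L α β) where
  bracket u v := ((⁅u.1, v.1⁆ : L), ceCocycle K L α β u.1 v.1)
  add_lie u v w := by
    show Prod.mk _ _ = (Prod.mk _ _ + Prod.mk _ _ : L × K)
    simp [ceCocycle, Prod.ext_iff, fst_add', fst_smul']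
    refine ⟨rfl, ?_⟩
    show _ = _ + _
    ring
  lie_add u v w := by
    show Prod.mk _ _ = (Prod.mk _ _ + Prod.mk _ _ : L × K)
    simp [ceCocycle, Prod.ext_iff, fst_add', fst_smul']
    refine ⟨rfl, ?_⟩
    show _ = _ + _
    ring
  lie_self u := by
    show Prod.mk _ _ = (0 : L × K)
    simp [ceCocycle, Prod.ext_iff]
  leibniz_lie u v w := by
    show Prod.mk _ _ = Prod.mk _ _ + Prod.mk _ _
    simp only [Prod.ext_iff, Prod.mk_add_mk, Prod.fst_add, Prod.snd_add]
    constructor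
    · exact leibniz_lie _ _ _
    · show ceCocycle K L α β u.1 ⁅v.1, w.1⁆ =
        ceCocycle K L α β ⁅u.1, v.1⁆ w.1 + ceCocycle K L α β v.1 ⁅u.1, w.1⁆
      simp [ceCocycle_lie_left, ceCocycle_lie_right]

noncomputable instance : LieAlgebra K (CExt K L α β) where
  lie_smul t u v := by
    show Prod.mk _ _ = (t • Prod.mk _ _ : L × K)
    simp [ceCocycle, Prod.ext_iff, fst_add', fst_smul', smul_sub, smul_eq_mul]
    refine ⟨rfl, ?_⟩
    show _ = t * _
    ring

lemma lie_fst (u v : CExt K L α β) : (⁅u, v⁆ : CExt K L α β).1 = ⁅u.1, v.1⁆ := rfl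

lemma lie_snd (u v : CExt K L α β) :
    (⁅u, v⁆ : CExt K L α β).2 = ceCocycle K L α β u.1 v.1 := rfl

/-- Projection onto `L` as a Lie algebra morphism. -/
noncomputable def proj : CExt K L α β →ₗ⁅K⁆ L where
  toFun u := u.1
  map_add' _ _ := rfl
  map_smul' _ _ := rfl
  map_lie' := rfl

lemma central (z w : CExt K L α β) (hz : proj K L α β z = 0) : ⁅z, w⁆ = 0 := by
  have hz1 : z.1 = 0 := hz
  show Prod.mk _ _ = (0 : L × K)
  rw [Prod.ext_iff]
  constructor
  · show (⁅z.1, w.1⁆ : L) = 0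
    rw [hz1, zero_lie]
  · show ceCocycle K L α β z.1 w.1 = 0
    rw [hz1]
    simp [ceCocycle]

end CExt

end CE

/-- for a finite-dimensional non-abelian nilpotent Lie algebra `L`,
the exterior center `Z^∧(L)` is contained in the derived subalgebra `L²`. -/
theorem exterior_center_le_derived (K L : Type) [Field K] [LieRing L] [LieAlgebra K L]
    [FiniteDimensional K L] [LieRing.IsNilpotent L] (hna : ¬IsLieAbelian L) :
    ∀ (X : Type) (π : FreeLieAlgebra K X →ₗ⁅K⁆ L), Function.Surjective π →
      ∀ x ∈ lieExteriorCenter K X π,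
        x ∈ (LieModule.lowerCentralSeries K L L 1 : LieSubmodule K L L) := by
  intro X π hπ x hx
  by_contra hxD
  set D : LieSubmodule K L L := LieModule.lowerCentralSeries K L L 1 with hD
  have hmemD : ∀ u v : L, ⁅u, v⁆ ∈ D := by
    intro u v
    rw [hD, LieModule.lowerCentralSeries_succ, LieModule.lowerCentralSeries_zero]
    exact LieSubmodule.lie_mem_lie (LieSubmodule.mem_top u) (LieSubmodule.mem_top v)
  have hdmk0 : ∀ u : L, dmk K L u = 0 ↔ u ∈ D := by
    intro u
    rw [dmk, Submodule.mkQ_apply, Submodule.Quotient.mk_eq_zero]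
    exact Iff.rfl
  have hqx : dmk K L x ≠ 0 := fun h => hxD ((hdmk0 x).mp h)
  -- there is `y` with `dmk x`, `dmk y` independent
  have hy : ∃ y : L, dmk K L y ∉ Submodule.span K {dmk K L x} := by
    by_contra h
    push_neg at h
    apply hna
    -- first: D ≤ LCS 2
    have hD2 : D ≤ LieModule.lowerCentralSeries K L L 2 := by
      have hdec : ∀ u : L, ∃ c : K, u - c • x ∈ D := by
        intro u
        obtain ⟨c, hc⟩ := Submodule.mem_span_singleton.mp (h u)
        exact ⟨c, (hdmk0 _).mp (by rw [map_sub, map_smul, hc, sub_self])⟩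
      have h2eq : LieModule.lowerCentralSeries K L L 2 = ⁅(⊤ : LieIdeal K L), D⁆ := by
        rw [LieModule.lowerCentralSeries_succ]
      rw [hD, LieModule.lowerCentralSeries_succ, LieModule.lowerCentralSeries_zero,
        LieSubmodule.lie_le_iff]
      intro u _ v _
      obtain ⟨c₁, hd₁⟩ := hdec u
      obtain ⟨c₂, hd₂⟩ := hdec v
      have hxu : ⁅x, u⁆ ∈ LieModule.lowerCentralSeries K L L 2 := by
        have : ⁅x, u⁆ = c₁ • ⁅x, x⁆ + ⁅x, u - c₁ • x⁆ := by
          rw [← lie_smul, ← lie_add]; congr 1; abel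
        rw [this, lie_self, smul_zero, zero_add, h2eq]
        exact LieSubmodule.lie_mem_lie (LieSubmodule.mem_top x) hd₁
      have huv : ⁅u, v⁆ = c₂ • (-⁅x, u⁆) + ⁅u, v - c₂ • x⁆ := by
        rw [lie_skew, ← lie_smul, ← lie_add]; congr 1; abel
      rw [huv]
      refine Submodule.add_mem _ (Submodule.smul_mem _ _ (Submodule.neg_mem _ hxu)) ?_
      rw [h2eq]
      exact LieSubmodule.lie_mem_lie (LieSubmodule.mem_top u) hd₂
    have hall : ∀ n, D ≤ LieModule.lowerCentralSeries K L L (n + 1) := by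
      intro n
      induction n with
      | zero => exact le_of_eq hD
      | succ n ih =>
        calc D ≤ LieModule.lowerCentralSeries K L L 2 := hD2
          _ = ⁅(⊤ : LieIdeal K L), D⁆ := by rw [LieModule.lowerCentralSeries_succ]
          _ ≤ ⁅(⊤ : LieIdeal K L), LieModule.lowerCentralSeries K L L (n + 1)⁆ :=
            LieSubmodule.mono_lie le_rfl ih
          _ = LieModule.lowerCentralSeries K L L (n + 2) :=
            (LieModule.lowerCentralSeries_succ K L L (n + 1)).symm
    obtain ⟨k, hk⟩ := (LieModule.isNilpotent_iff K L L).mp inferInstance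
    have hDbot : D = ⊥ := by
      refine le_bot_iff.mp ?_
      calc D ≤ LieModule.lowerCentralSeries K L L (k + 1) := hall k
        _ ≤ LieModule.lowerCentralSeries K L L k :=
          LieModule.antitone_lowerCentralSeries K L L (Nat.le_succ k)
        _ = ⊥ := hk
    exact ⟨fun u v => by
      have := hmemD u v
      rw [hDbot] at this
      exact (LieSubmodule.mem_bot _).mp this⟩
  obtain ⟨y, hy⟩ := hy
  have hxy : dmk K L x ∉ Submodule.span K {dmk K L y} := by
    intro hmem
    obtain ⟨t, ht⟩ := Submodule.mem_span_singleton.mp hmem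
    have htne : t ≠ 0 := fun h0 => hqx (by rw [← ht, h0, zero_smul])
    exact hy (Submodule.mem_span_singleton.mpr ⟨t⁻¹, by rw [← ht, smul_smul,
      inv_mul_cancel₀ htne, one_smul]⟩)
  obtain ⟨α, hαx, hαmap⟩ :=
    Submodule.exists_dual_map_eq_bot_of_notMem hxy inferInstance
  obtain ⟨β, hβy, hβmap⟩ :=
    Submodule.exists_dual_map_eq_bot_of_notMem hy inferInstance
  have hαy : α (dmk K L y) = 0 := by
    have : α (dmk K L y) ∈ Submodule.map α (Submodule.span K {dmk K L y}) :=
      Submodule.mem_map_of_mem (Submodule.mem_span_singleton_self _)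
    rw [hαmap] at this
    exact (Submodule.mem_bot K).mp this
  have hβx : β (dmk K L x) = 0 := by
    have : β (dmk K L x) ∈ Submodule.map β (Submodule.span K {dmk K L x}) :=
      Submodule.mem_map_of_mem (Submodule.mem_span_singleton_self _)
    rw [hβmap] at this
    exact (Submodule.mem_bot K).mp this
  -- lift the presentation to the central extension
  let ψ : FreeLieAlgebra K X →ₗ⁅K⁆ CExt K L α β :=
    FreeLieAlgebra.lift K fun i => ((π (FreeLieAlgebra.of K i), 0) : CExt K L α β)
  have hcomp : ∀ c : FreeLieAlgebra K X, CExt.proj K L α β (ψ c) = π c := by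
    have : (CExt.proj K L α β).comp ψ = π := by
      apply (FreeLieAlgebra.lift K).symm.injective
      rw [FreeLieAlgebra.lift_symm_apply, FreeLieAlgebra.lift_symm_apply]
      funext i
      show CExt.proj K L α β (ψ (FreeLieAlgebra.of K i)) = π (FreeLieAlgebra.of K i)
      rw [show ψ (FreeLieAlgebra.of K i) = ((π (FreeLieAlgebra.of K i), 0) : CExt K L α β) from
        FreeLieAlgebra.lift_of_apply _ i]
      rfl
    intro c
    exact congrFun (congrArg (fun F : _ →ₗ⁅K⁆ L => (F : FreeLieAlgebra K X → L)) this) c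
  obtain ⟨a, ha⟩ := hπ x
  obtain ⟨b, hb⟩ := hπ y
  have hmem := hx a ha b
  have hker : (⁅π.ker, (⊤ : LieIdeal K (FreeLieAlgebra K X))⁆ :
      LieIdeal K (FreeLieAlgebra K X)) ≤ ψ.ker := by
    rw [LieSubmodule.lie_le_iff]
    intro r hr f _
    rw [LieHom.mem_ker, LieHom.map_lie]
    apply CExt.central
    rw [hcomp r]
    exact (LieHom.mem_ker).mp hr
  have hz : ψ ⁅a, b⁆ = 0 := (LieHom.mem_ker).mp (hker hmem)
  have h1 : (ψ a).1 = x := by rw [← ha]; exact hcomp a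
  have h2 : (ψ b).1 = y := by rw [← hb]; exact hcomp b
  have hsnd : (ψ ⁅a, b⁆).2 = ceCocycle K L α β x y := by
    rw [LieHom.map_lie, CExt.lie_snd, h1, h2]
  rw [hz] at hsnd
  have : (0 : K) = α (dmk K L x) * β (dmk K L y) := by
    rw [show ((0 : CExt K L α β)).2 = (0 : K) from rfl] at hsnd
    rw [hsnd]; simp [ceCocycle, hαy, hβx]
  exact mul_ne_zero hαx hβy this.symm
end

section
/- Let L be a Lie algebra over a field. The map γ_L : L^{ab} ⊗ L^{ab} ⊗ L^{ab} → (L²/L³) ⊗ L/L² defined by x̄ ⊗ ȳ ⊗ z̄ ↦ ([x,y]+L³) ⊗ (z+L²) + ([z,x]+L³) ⊗ (y+L²) + ([y,z]+L³) ⊗ (x+L²) is well defined and linear, and γ_L(x̄ ⊗ ȳ ⊗ z̄) = 0 whenever any two of the elements x, y, z of L are linearly dependent. -/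
open Module TensorProduct


lemma lie_mem_lowerCentral_one (K : Type) [Field K] {L : Type} [LieRing L]
    [LieAlgebra K L] (x y : L) : ⁅x, y⁆ ∈ LieModule.lowerCentralSeries K L L 1 := by
  rw [show (1 : ℕ) = 0 + 1 from rfl, LieModule.lowerCentralSeries_succ]
  exact LieSubmodule.lie_mem_lie (LieSubmodule.mem_top x) (LieSubmodule.mem_top y)

/-- The derived subalgebra `L²` as a submodule. -/
noncomputable abbrev lieD2 (K : Type) [Field K] (L : Type) [LieRing L] [LieAlgebra K L] :
    Submodule K L :=
  ((LieModule.lowerCentralSeries K L L 1 : LieSubmodule K L L) : Submodule K L)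

/-- `L³` as a submodule. -/
noncomputable abbrev lieD3 (K : Type) [Field K] (L : Type) [LieRing L] [LieAlgebra K L] :
    Submodule K L :=
  ((LieModule.lowerCentralSeries K L L 2 : LieSubmodule K L L) : Submodule K L)

/-- The quotient `L²/L³`. -/
noncomputable abbrev lieQ23 (K : Type) [Field K] (L : Type) [LieRing L] [LieAlgebra K L] :
    Type :=
  ↥(lieD2 K L) ⧸ (Submodule.comap (lieD2 K L).subtype (lieD3 K L))

/-- The class of `⁅x,y⁆ + L³` in `L²/L³`. -/
noncomputable def lieBr23 (K : Type) [Field K] {L : Type} [LieRing L] [LieAlgebra K L]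
    (x y : L) : lieQ23 K L :=
  Submodule.Quotient.mk ⟨⁅x, y⁆, lie_mem_lowerCentral_one K x y⟩

section GammaAux

variable (K L : Type) [Field K] [LieRing L] [LieAlgebra K L]

lemma lieBr23_add_left (x x' y : L) :
    lieBr23 K (x + x') y = lieBr23 K x y + lieBr23 K x' y := by
  unfold lieBr23
  rw [← Submodule.Quotient.mk_add]
  congr 1
  exact Subtype.ext (add_lie x x' y)

lemma lieBr23_add_right (x y y' : L) :
    lieBr23 K x (y + y') = lieBr23 K x y + lieBr23 K x y' := by
  unfold lieBr23
  rw [← Submodule.Quotient.mk_add]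
  congr 1
  exact Subtype.ext (lie_add x y y')

lemma lieBr23_smul_left (c : K) (x y : L) :
    lieBr23 K (c • x) y = c • lieBr23 K x y := by
  unfold lieBr23
  rw [← Submodule.Quotient.mk_smul]
  congr 1
  exact Subtype.ext (smul_lie c x y)

lemma lieBr23_smul_right (c : K) (x y : L) :
    lieBr23 K x (c • y) = c • lieBr23 K x y := by
  unfold lieBr23
  rw [← Submodule.Quotient.mk_smul]
  congr 1
  exact Subtype.ext (lie_smul c x y)

lemma lieBr23_self (x : L) : lieBr23 K x x = 0 := by
  unfold lieBr23
  rw [Submodule.Quotient.mk_eq_zero]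
  simp only [Submodule.mem_comap, Submodule.coe_subtype,
    LieSubmodule.mem_toSubmodule]
  simp [lie_self]

lemma lieBr23_skew (x y : L) : lieBr23 K x y = - lieBr23 K y x := by
  unfold lieBr23
  rw [← Submodule.Quotient.mk_neg]
  congr 1
  exact Subtype.ext (lie_skew x y).symm

lemma lieBr23_zero_right (x y : L) (hy : y ∈ lieD2 K L) :
    lieBr23 K x y = 0 := by
  have h2 : ⁅x, y⁆ ∈ LieModule.lowerCentralSeries K L L 2 := by
    rw [show (2 : ℕ) = 1 + 1 from rfl, LieModule.lowerCentralSeries_succ]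
    exact LieSubmodule.lie_mem_lie (LieSubmodule.mem_top x) hy
  unfold lieBr23
  rw [Submodule.Quotient.mk_eq_zero]
  simpa only [Submodule.mem_comap, Submodule.coe_subtype,
    LieSubmodule.mem_toSubmodule] using (show ⁅x, y⁆ ∈ lieD3 K L from h2)

lemma lieBr23_zero_left (x : L) (hx : x ∈ lieD2 K L) (y : L) :
    lieBr23 K x y = 0 := by
  rw [lieBr23_skew, lieBr23_zero_right K L y x hx, neg_zero]

/-- The bracket as a bilinear map `L →ₗ L →ₗ L²/L³`. -/
noncomputable def br0 : L →ₗ[K] L →ₗ[K] lieQ23 K L :=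
  LinearMap.mk₂ K (fun x y => lieBr23 K x y)
    (lieBr23_add_left K L)
    (lieBr23_smul_left K L)
    (lieBr23_add_right K L)
    (lieBr23_smul_right K L)

/-- The bracket descended to `L/L² →ₗ L/L² →ₗ L²/L³`. -/
noncomputable def brQ : (L ⧸ lieD2 K L) →ₗ[K] (L ⧸ lieD2 K L) →ₗ[K] lieQ23 K L :=
  (Submodule.liftQ (lieD2 K L)
    (Submodule.liftQ (lieD2 K L) (br0 K L)
      (fun x hx => LinearMap.ext fun y => lieBr23_zero_left K L x hx y)).flip
    (fun y hy => LinearMap.ext fun a => by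
      obtain ⟨x, rfl⟩ := Submodule.mkQ_surjective _ a
      exact lieBr23_zero_right K L x y hy)).flip

lemma brQ_apply (x y : L) :
    brQ K L (Submodule.Quotient.mk x) (Submodule.Quotient.mk y) = lieBr23 K x y := rfl

/-- The trilinear map on `L/L²` in curried form. -/
noncomputable def Hmap : (L ⧸ lieD2 K L) →ₗ[K] (L ⧸ lieD2 K L) →ₗ[K]
    (L ⧸ lieD2 K L) →ₗ[K] (lieQ23 K L ⊗[K] (L ⧸ lieD2 K L)) :=
  LinearMap.mk₂ K
    (fun a b =>
      TensorProduct.mk K (lieQ23 K L) (L ⧸ lieD2 K L) (brQ K L a b)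
      + ((TensorProduct.mk K (lieQ23 K L) (L ⧸ lieD2 K L)).flip b).comp
          ((brQ K L).flip a)
      + ((TensorProduct.mk K (lieQ23 K L) (L ⧸ lieD2 K L)).flip a).comp (brQ K L b))
    (fun a a' b => LinearMap.ext fun c => by
      simp only [LinearMap.add_apply, LinearMap.comp_apply, LinearMap.flip_apply,
        map_add, LinearMap.map_add, mk_apply, add_tmul, tmul_add]
      abel)
    (fun s a b => LinearMap.ext fun c => by
      simp only [LinearMap.add_apply, LinearMap.comp_apply, LinearMap.flip_apply,
        map_smul, LinearMap.map_smul, LinearMap.smul_apply, mk_apply]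
      simp only [smul_add, tmul_smul, smul_tmul'])
    (fun a b b' => LinearMap.ext fun c => by
      simp only [LinearMap.add_apply, LinearMap.comp_apply, LinearMap.flip_apply,
        map_add, LinearMap.map_add, mk_apply, add_tmul, tmul_add]
      abel)
    (fun s a b => LinearMap.ext fun c => by
      simp only [LinearMap.add_apply, LinearMap.comp_apply, LinearMap.flip_apply,
        map_smul, LinearMap.map_smul, LinearMap.smul_apply, mk_apply]
      simp only [smul_add, tmul_smul, smul_tmul'])

lemma Hmap_apply (x y z : L) :
    Hmap K L ((lieD2 K L).mkQ x) ((lieD2 K L).mkQ y) ((lieD2 K L).mkQ z) =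
      lieBr23 K x y ⊗ₜ (lieD2 K L).mkQ z + lieBr23 K z x ⊗ₜ (lieD2 K L).mkQ y
        + lieBr23 K y z ⊗ₜ (lieD2 K L).mkQ x := by
  simp only [Hmap, Submodule.mkQ_apply, LinearMap.mk₂_apply, LinearMap.add_apply,
    LinearMap.comp_apply, LinearMap.flip_apply, mk_apply, brQ_apply]

end GammaAux

/-- the map
`γ_L : L^{ab} ⊗ L^{ab} ⊗ L^{ab} → (L²/L³) ⊗ L/L²`,
`x̄ ⊗ ȳ ⊗ z̄ ↦ ([x,y]+L³)⊗(z+L²) + ([z,x]+L³)⊗(y+L²) + ([y,z]+L³)⊗(x+L²)`,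
is well defined and linear, and vanishes whenever two of `x, y, z` are linearly
dependent. -/
theorem gammaL_well_defined (K L : Type) [Field K] [LieRing L] [LieAlgebra K L] :
    ∃ γ : ((L ⧸ lieD2 K L) ⊗[K] ((L ⧸ lieD2 K L) ⊗[K] (L ⧸ lieD2 K L))) →ₗ[K]
        ((lieQ23 K L) ⊗[K] (L ⧸ lieD2 K L)),
      (∀ x y z : L,
        γ ((lieD2 K L).mkQ x ⊗ₜ ((lieD2 K L).mkQ y ⊗ₜ (lieD2 K L).mkQ z)) =
          lieBr23 K x y ⊗ₜ (lieD2 K L).mkQ z + lieBr23 K z x ⊗ₜ (lieD2 K L).mkQ y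
            + lieBr23 K y z ⊗ₜ (lieD2 K L).mkQ x) ∧
      (∀ x y z : L,
        (¬LinearIndependent K ![x, y] ∨ ¬LinearIndependent K ![x, z]
            ∨ ¬LinearIndependent K ![y, z]) →
        γ ((lieD2 K L).mkQ x ⊗ₜ ((lieD2 K L).mkQ y ⊗ₜ (lieD2 K L).mkQ z)) = 0) := by
  have hγ : ∀ x y z : L,
      TensorProduct.lift
        ((TensorProduct.lift.equiv (RingHom.id K) (L ⧸ lieD2 K L) (L ⧸ lieD2 K L)
            (lieQ23 K L ⊗[K] (L ⧸ lieD2 K L))).toLinearMap ∘ₗ Hmap K L)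
        ((lieD2 K L).mkQ x ⊗ₜ ((lieD2 K L).mkQ y ⊗ₜ (lieD2 K L).mkQ z)) =
      lieBr23 K x y ⊗ₜ (lieD2 K L).mkQ z + lieBr23 K z x ⊗ₜ (lieD2 K L).mkQ y
        + lieBr23 K y z ⊗ₜ (lieD2 K L).mkQ x := by
    intro x y z
    simp only [TensorProduct.lift.tmul, LinearMap.comp_apply,
      TensorProduct.lift.equiv_apply]
    exact Hmap_apply K L x y z
  refine ⟨TensorProduct.lift
    ((TensorProduct.lift.equiv (RingHom.id K) (L ⧸ lieD2 K L) (L ⧸ lieD2 K L)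
        (lieQ23 K L ⊗[K] (L ⧸ lieD2 K L))).toLinearMap ∘ₗ Hmap K L), hγ, ?_⟩
  · -- vanishing
    have key : ∀ x y z : L,
        lieBr23 K x y ⊗ₜ[K] (lieD2 K L).mkQ z + lieBr23 K z x ⊗ₜ[K] (lieD2 K L).mkQ y
          + lieBr23 K y z ⊗ₜ[K] (lieD2 K L).mkQ x =
        lieBr23 K y z ⊗ₜ[K] (lieD2 K L).mkQ x + lieBr23 K x y ⊗ₜ[K] (lieD2 K L).mkQ z
          + lieBr23 K z x ⊗ₜ[K] (lieD2 K L).mkQ y := by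
      intro x y z; abel
    have Ezr : ∀ (x z : L) (c : K),
        lieBr23 K x (c • x) ⊗ₜ[K] (lieD2 K L).mkQ z
          + lieBr23 K z x ⊗ₜ[K] (lieD2 K L).mkQ (c • x)
          + lieBr23 K (c • x) z ⊗ₜ[K] (lieD2 K L).mkQ x = 0 := by
      intro x z c
      rw [lieBr23_smul_right, lieBr23_self, smul_zero, zero_tmul, zero_add,
        map_smul, tmul_smul, lieBr23_smul_left, lieBr23_skew K L x z, smul_neg,
        neg_tmul, smul_tmul', add_neg_cancel]
    have Ezl : ∀ (y z : L) (c : K),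
        lieBr23 K (c • y) y ⊗ₜ[K] (lieD2 K L).mkQ z
          + lieBr23 K z (c • y) ⊗ₜ[K] (lieD2 K L).mkQ y
          + lieBr23 K y z ⊗ₜ[K] (lieD2 K L).mkQ (c • y) = 0 := by
      intro y z c
      rw [lieBr23_smul_left, lieBr23_self, smul_zero, zero_tmul, zero_add,
        lieBr23_smul_right, map_smul, tmul_smul, lieBr23_skew K L z y, smul_neg,
        neg_tmul, smul_tmul', neg_add_cancel]
    have Edep : ∀ x y z : L, ¬LinearIndependent K ![x, y] →
        lieBr23 K x y ⊗ₜ[K] (lieD2 K L).mkQ z + lieBr23 K z x ⊗ₜ[K] (lieD2 K L).mkQ y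
          + lieBr23 K y z ⊗ₜ[K] (lieD2 K L).mkQ x = 0 := by
      intro x y z h
      rw [LinearIndependent.pair_iff] at h
      push_neg at h
      obtain ⟨s, t, hst, hne⟩ := h
      by_cases ht : t = 0
      · subst ht
        have hs : s ≠ 0 := fun hs => (hne hs) rfl
        have hx : x = (0 : K) • y := by
          rw [zero_smul]
          have h0 : s • x = 0 := by simpa using hst
          exact (smul_eq_zero.mp h0).resolve_left hs
        rw [hx]; exact Ezl y z 0
      · have hy : y = (-(t⁻¹ * s)) • x := by
          have h0 : t • y = -(s • x) := by
            rw [eq_neg_iff_add_eq_zero, add_comm]; exact hst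
          calc y = t⁻¹ • (t • y) := (inv_smul_smul₀ ht y).symm
            _ = (-(t⁻¹ * s)) • x := by rw [h0, smul_neg, ← mul_smul, ← neg_smul]
        rw [hy]; exact Ezr x z _
    intro x y z hdep
    rw [hγ]
    rcases hdep with h | h | h
    · exact Edep x y z h
    · rw [key, key]
      have h' : ¬LinearIndependent K ![z, x] := by
        rw [LinearIndependent.pair_iff] at h ⊢
        push_neg at h ⊢
        obtain ⟨s, t, hst, hne⟩ := h
        exact ⟨t, s, by rw [add_comm]; exact hst, fun h1 h2 => hne h2 h1⟩
      exact Edep z x y h'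
    · rw [key]
      exact Edep y z x h
end

section
/- There is no n-dimensional nilpotent Lie algebra L with dim L² = n−2 (n ≥ 4) such that dim M(L) attains the bound (1/2)(n−m−1)(n+m) − Σ_{i=2}^{min(n−m,c)} (n−m−i) with m = n−2, i.e. such that dim M(L) = n−1. -/
open Module

/-- `L` is nilpotent of nilpotency class exactly `c`: in the paper's notation
`γ_{c+1}(L) = 0` and `γ_k(L) ≠ 0` for `k ≤ c` (Mathlib's `lowerCentralSeries` is indexed
so that `γ_{k+1}(L) = lowerCentralSeries K L L k`). -/
def lieNilpotencyClass (K : Type) [Field K] (L : Type) [LieRing L] [LieAlgebra K L]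
    (c : ℕ) : Prop :=
  LieModule.lowerCentralSeries K L L c = ⊥ ∧
    ∀ k < c, LieModule.lowerCentralSeries K L L k ≠ ⊥

section AuxUtil
open LieModule Function

section Util
variable {K : Type} [Field K] {V W : Type} [AddCommGroup V] [Module K V]
  [AddCommGroup W] [Module K W]

lemma aux_finrank_map_add (f : V →ₗ[K] W) (S : Submodule K V) [FiniteDimensional K S] :
    finrank K (S.map f) + finrank K ↥(S ⊓ LinearMap.ker f) = finrank K S := by
  have h1 := LinearMap.finrank_range_add_finrank_ker (f ∘ₗ S.subtype)
  have h2 : LinearMap.range (f ∘ₗ S.subtype) = S.map f := by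
    rw [LinearMap.range_comp, Submodule.range_subtype]
  have h3 : LinearMap.ker (f ∘ₗ S.subtype) = Submodule.comap S.subtype (S ⊓ LinearMap.ker f) := by
    rw [LinearMap.ker_comp, Submodule.comap_inf, Submodule.comap_subtype_self, top_inf_eq]
  have h4 : finrank K ↥(Submodule.comap S.subtype (S ⊓ LinearMap.ker f))
      = finrank K ↥(S ⊓ LinearMap.ker f) :=
    (Submodule.comapSubtypeEquivOfLe inf_le_left).finrank_eq
  rw [h2, h3, h4] at h1
  exact h1

lemma aux_finrank_sup_singleton {S : Submodule K V} [FiniteDimensional K S] {t : V}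
    (ht : t ∉ S) : finrank K ↥(S ⊔ K ∙ t) = finrank K S + 1 := by
  have h0 : t ≠ 0 := fun h => ht (h ▸ S.zero_mem)
  have hd : S ⊓ (K ∙ t) = ⊥ := by
    rw [eq_bot_iff]
    rintro v ⟨hv1, hv2⟩
    rcases Submodule.mem_span_singleton.mp hv2 with ⟨c, rfl⟩
    rcases eq_or_ne c 0 with rfl | hc
    · simp
    · have := S.smul_mem c⁻¹ hv1
      rw [smul_smul, inv_mul_cancel₀ hc, one_smul] at this
      exact absurd this ht
  have := Submodule.finrank_sup_add_finrank_inf_eq S (K ∙ t)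
  rw [hd] at this
  simp only [finrank_bot, add_zero] at this
  rw [this, finrank_span_singleton h0]

end Util

open LieModule Function

section LieDefs
variable (K : Type) [Field K] {F L : Type} [LieRing F] [LieAlgebra K F]
  [LieRing L] [LieAlgebra K L]

/-- The quotient map as a morphism of Lie algebras. -/
def auxQuotLieHom (I : LieIdeal K F) : F →ₗ⁅K⁆ F ⧸ I :=
  { (LieSubmodule.toSubmodule I).mkQ with
    map_lie' := by intros x y; exact (LieSubmodule.Quotient.mk_bracket I x y) }

lemma auxQuotLieHom_surj (I : LieIdeal K F) : Surjective (auxQuotLieHom K I) :=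
  Submodule.Quotient.mk_surjective _

noncomputable def auxHopfDim (π : F →ₗ⁅K⁆ L) : ℕ :=
  finrank K
    (Submodule.map (auxQuotLieHom K (⁅π.ker, (⊤ : LieIdeal K F)⁆ : LieIdeal K F)).toLinearMap
      (LieSubmodule.toSubmodule (π.ker ⊓ LieModule.lowerCentralSeries K F F 1 : LieIdeal K F)))

example (π : F →ₗ⁅K⁆ L) (a b : F ⧸ (⁅π.ker, (⊤ : LieIdeal K F)⁆ : LieIdeal K F)) :
    F ⧸ (⁅π.ker, (⊤ : LieIdeal K F)⁆ : LieIdeal K F) := ⁅a, b⁆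

lemma aux_hopf_eq {X : Type} (π : FreeLieAlgebra K X →ₗ⁅K⁆ L) :
    lieSchurMultiplierDim K X π = auxHopfDim K π := by
  set FF := FreeLieAlgebra K X
  set J : LieIdeal K FF := ⁅π.ker, (⊤ : LieIdeal K FF)⁆ with hJ
  set Ms : Submodule K FF :=
    LieSubmodule.toSubmodule (π.ker ⊓ LieModule.lowerCentralSeries K FF FF 1 : LieIdeal K FF)
    with hMs
  set f : ↥Ms →ₗ[K] (FF ⧸ J) := (auxQuotLieHom K J).toLinearMap ∘ₗ Ms.subtype with hf
  have hker : LinearMap.ker f = Submodule.comap Ms.subtype (LieSubmodule.toSubmodule J) := by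
    rw [hf, LinearMap.ker_comp]
    congr 1
    exact Submodule.ker_mkQ _
  have hrange : LinearMap.range f = Submodule.map (auxQuotLieHom K J).toLinearMap Ms := by
    rw [hf, LinearMap.range_comp, Submodule.range_subtype]
  have e1 : (↥Ms ⧸ Submodule.comap Ms.subtype (LieSubmodule.toSubmodule J)) ≃ₗ[K]
      (↥Ms ⧸ LinearMap.ker f) := Submodule.quotEquivOfEq _ _ hker.symm
  have e2 := f.quotKerEquivRange
  calc lieSchurMultiplierDim K X π
      = finrank K (↥Ms ⧸ Submodule.comap Ms.subtype (LieSubmodule.toSubmodule J)) := rfl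
    _ = finrank K (↥Ms ⧸ LinearMap.ker f) := e1.finrank_eq
    _ = finrank K (LinearMap.range f) := e2.finrank_eq
    _ = auxHopfDim K π := by rw [hrange]; rfl

end LieDefs


section LcsLemmas
variable {K : Type} [Field K] {F L : Type} [LieRing F] [LieAlgebra K F]
  [LieRing L] [LieAlgebra K L]

lemma aux_lcs_map (π : F →ₗ⁅K⁆ L) (hπ : Surjective π) (k : ℕ) :
    (LieSubmodule.toSubmodule (lowerCentralSeries K F F k)).map π.toLinearMap
      = LieSubmodule.toSubmodule (lowerCentralSeries K L L k) := by
  rw [← LieIdeal.coe_map_of_surjective hπ, LieIdeal.lowerCentralSeries_map_eq k hπ]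

lemma aux_lcs_lie_mem : ∀ (j i : ℕ) (f g : F), f ∈ lowerCentralSeries K F F i →
    g ∈ lowerCentralSeries K F F j → ⁅f, g⁆ ∈ lowerCentralSeries K F F (i + j + 1) := by
  intro j
  induction j with
  | zero =>
    intro i f g hf _
    have h : ⁅f, g⁆ = -⁅g, f⁆ := (lie_skew f g).symm
    rw [Nat.add_zero, h, lowerCentralSeries_succ]
    exact neg_mem (LieSubmodule.lie_mem_lie (LieSubmodule.mem_top g) hf)
  | succ j ih =>
    intro i f g hf hg
    have hg' : g ∈ Submodule.span K
        {m | ∃ x ∈ (⊤ : LieIdeal K F), ∃ n ∈ lowerCentralSeries K F F j, ⁅x, n⁆ = m} := by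
      rw [← LieSubmodule.lieIdeal_oper_eq_linear_span', ← lowerCentralSeries_succ]
      exact hg
    have key : ∀ g', g' ∈ Submodule.span K
        {m | ∃ x ∈ (⊤ : LieIdeal K F), ∃ n ∈ lowerCentralSeries K F F j, ⁅x, n⁆ = m} →
        ⁅f, g'⁆ ∈ lowerCentralSeries K F F (i + (j + 1) + 1) := by
      intro g' hgg
      refine Submodule.span_induction ?_ ?_ ?_ ?_ hgg
      · rintro m ⟨x, -, n, hn, rfl⟩
        rw [leibniz_lie]
        apply add_mem
        · have h1 : ⁅f, x⁆ ∈ lowerCentralSeries K F F (i + 1) := by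
            have hsk : ⁅f, x⁆ = -⁅x, f⁆ := (lie_skew f x).symm
            rw [LieModule.lowerCentralSeries_succ, hsk]
            exact neg_mem (LieSubmodule.lie_mem_lie (LieSubmodule.mem_top x) hf)
          have := ih (i + 1) ⁅f, x⁆ n h1 hn
          have harith : i + 1 + j + 1 = i + (j + 1) + 1 := by omega
          rwa [harith] at this
        · have h2 := ih i f n hf hn
          have : ⁅x, ⁅f, n⁆⁆ ∈ lowerCentralSeries K F F (i + j + 1 + 1) := by
            rw [LieModule.lowerCentralSeries_succ]
            exact LieSubmodule.lie_mem_lie (LieSubmodule.mem_top x) h2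
          have harith : i + j + 1 + 1 = i + (j + 1) + 1 := by omega
          rwa [harith] at this
      · simp
      · intro u v _ _ hu hv
        rw [lie_add]; exact add_mem hu hv
      · intro c u _ hu
        rw [lie_smul]; exact Submodule.smul_mem _ c hu
    exact key g hg'

lemma aux_lcs_stab {c : ℕ} (hc : lowerCentralSeries K L L c = ⊥) {k : ℕ}
    (h : lowerCentralSeries K L L (k + 1) = lowerCentralSeries K L L k) :
    lowerCentralSeries K L L k = ⊥ := by
  have key : ∀ m, lowerCentralSeries K L L (k + m) = lowerCentralSeries K L L k := by
    intro m
    induction m with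
    | zero => rfl
    | succ m ih =>
      have h1 : k + (m + 1) = (k + m) + 1 := rfl
      rw [h1, lowerCentralSeries_succ, ih, ← lowerCentralSeries_succ, h]
  rcases le_total c k with hck | hck
  · rw [eq_bot_iff, ← hc]
    exact antitone_lowerCentralSeries K L L hck
  · rw [← key (c - k), Nat.add_sub_cancel' hck]
    exact hc

lemma aux_gen_pair (L : Type) [LieRing L] [LieAlgebra K L] [FiniteDimensional K L]
    (h2 : finrank K (L ⧸ (lowerCentralSeries K L L 1 : LieIdeal K L)) = 2) :
    ∃ a b : L, ∀ l : L, ∃ (α β : K) (g : L), g ∈ lowerCentralSeries K L L 1 ∧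
      l = α • a + β • b + g := by
  set N : LieIdeal K L := lowerCentralSeries K L L 1 with hN
  haveI : FiniteDimensional K (L ⧸ N) := Module.Finite.quotient K _
  let bQ : Basis (Fin 2) K (L ⧸ N) :=
    (Module.finBasis K (L ⧸ N)).reindex (finCongr h2)
  obtain ⟨a, ha⟩ := auxQuotLieHom_surj K N (bQ 0)
  obtain ⟨b, hb⟩ := auxQuotLieHom_surj K N (bQ 1)
  refine ⟨a, b, fun l => ?_⟩
  set w : L ⧸ N := auxQuotLieHom K N l with hw
  have hrepr := bQ.sum_repr w
  rw [Fin.sum_univ_two] at hrepr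
  set α := bQ.repr w 0
  set β := bQ.repr w 1
  refine ⟨α, β, l - (α • a + β • b), ?_, by abel⟩
  have hmk : auxQuotLieHom K N (l - (α • a + β • b)) = 0 := by
    rw [map_sub, map_add, map_smul, map_smul, ha, hb, ← hw, ← hrepr]
    abel
  have := (Submodule.Quotient.mk_eq_zero (LieSubmodule.toSubmodule N)
    (x := l - (α • a + β • b))).mp hmk
  exact this

end LcsLemmas

section AuxStep
open LieModule Function Module

variable {K : Type} [Field K] {F L : Type} [LieRing F] [LieAlgebra K F]
  [LieRing L] [LieAlgebra K L]

lemma auxQuotLieHom_eq_zero_iff (I : LieIdeal K F) (x : F) :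
    auxQuotLieHom K I x = 0 ↔ x ∈ I :=
  Submodule.Quotient.mk_eq_zero _

/-- The span of a central element as a Lie ideal. -/
def auxCentralIdeal (K : Type) [Field K] {L : Type} [LieRing L] [LieAlgebra K L]
    (z : L) (hzc : ∀ w : L, ⁅w, z⁆ = 0) : LieIdeal K L where
  carrier := (K ∙ z : Submodule K L)
  add_mem' := fun ha hb => Submodule.add_mem _ ha hb
  zero_mem' := Submodule.zero_mem _
  smul_mem' := fun c _ h => Submodule.smul_mem _ c h
  lie_mem := by
    intro x m hm
    rcases Submodule.mem_span_singleton.mp hm with ⟨c, rfl⟩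
    have : ⁅x, c • z⁆ = (0 : L) := by rw [lie_smul, hzc, smul_zero]
    show ⁅x, c • z⁆ ∈ (K ∙ z : Submodule K L)
    rw [this]
    exact Submodule.zero_mem _

lemma auxCentralIdeal_coe (z : L) (hzc : ∀ w : L, ⁅w, z⁆ = 0) :
    LieSubmodule.toSubmodule (auxCentralIdeal K z hzc) = (K ∙ z : Submodule K L) := rfl

lemma aux_step [FiniteDimensional K L] (π : F →ₗ⁅K⁆ L) (hπ : Surjective π)
    (z : L) (hz0 : z ≠ 0) (hzc : ∀ w : L, ⁅w, z⁆ = 0)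
    (hz2 : z ∈ lowerCentralSeries K L L 1) (a b : L)
    (hab : ∀ l : L, ∃ (α β : K) (g : L), g ∈ lowerCentralSeries K L L 1 ∧
      l = α • a + β • b + g) :
    auxHopfDim K π ≤
      auxHopfDim K ((auxQuotLieHom K (auxCentralIdeal K z hzc)).comp π) + 1 := by
  classical
  set Z : LieIdeal K L := auxCentralIdeal K z hzc with hZ
  set π' : F →ₗ⁅K⁆ L ⧸ Z := (auxQuotLieHom K Z).comp π with hπ'
  set R : LieIdeal K F := π.ker with hR
  set T : LieIdeal K F := π'.ker with hT
  set J : LieIdeal K F := ⁅R, (⊤ : LieIdeal K F)⁆ with hJ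
  set JT : LieIdeal K F := ⁅T, (⊤ : LieIdeal K F)⁆ with hJT
  set C1 : Submodule K F := LieSubmodule.toSubmodule (lowerCentralSeries K F F 1) with hC1
  set R' : Submodule K F := LieSubmodule.toSubmodule R with hR'
  set T' : Submodule K F := LieSubmodule.toSubmodule T with hT'
  set M : Submodule K F :=
    LieSubmodule.toSubmodule (π.ker ⊓ lowerCentralSeries K F F 1) with hM
  have hM' : M = R' ⊓ C1 := by
    rw [hM, LieSubmodule.inf_toSubmodule]
  have hMR : M ≤ R' := by rw [hM']; exact inf_le_left
  have hMC : M ≤ C1 := by rw [hM']; exact inf_le_right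
  -- membership in T
  have hTmem : ∀ s : F, s ∈ T ↔ π s ∈ (K ∙ z : Submodule K L) := by
    intro s
    rw [hT, LieHom.mem_ker]
    show auxQuotLieHom K Z (π s) = 0 ↔ _
    rw [auxQuotLieHom_eq_zero_iff]
    rfl
  have hRT : R ≤ T := by
    intro s hs
    rw [LieHom.mem_ker] at hs
    rw [hTmem]
    rw [hs]
    exact Submodule.zero_mem _
  -- choose t
  have hz2' : z ∈ (LieSubmodule.toSubmodule (lowerCentralSeries K L L 1)) := hz2
  rw [← aux_lcs_map π hπ 1] at hz2'
  obtain ⟨t, ht1, ht2₀⟩ := Submodule.mem_map.mp hz2'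
  have ht2 : π t = z := ht2₀
  have htT : t ∈ T := by
    rw [hTmem, ht2]
    exact Submodule.mem_span_singleton_self z
  have htC1 : t ∈ C1 := ht1
  -- T' = R' ⊔ K ∙ t
  have hTRt : T' = R' ⊔ (K ∙ t : Submodule K F) := by
    apply le_antisymm
    · intro s hs
      have := (hTmem s).mp hs
      rcases Submodule.mem_span_singleton.mp this with ⟨c, hc⟩
      have hr : s - c • t ∈ R' := by
        show s - c • t ∈ R
        rw [LieHom.mem_ker, map_sub, map_smul, ht2, hc, sub_self]
      have : s = (s - c • t) + c • t := by abel
      rw [this]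
      exact Submodule.add_mem _ (Submodule.mem_sup_left hr)
        (Submodule.mem_sup_right (Submodule.smul_mem _ c (Submodule.mem_span_singleton_self t)))
    · apply sup_le
      · intro s hs; exact hRT hs
      · rw [Submodule.span_le, Set.singleton_subset_iff]
        exact htT
  have hJJT : J ≤ JT := LieSubmodule.mono_lie hRT le_rfl
  have hJTR : JT ≤ R := by
    rw [hJT, LieSubmodule.lie_le_iff]
    intro s hs f _
    rw [LieHom.mem_ker, LieHom.map_lie]
    rcases Submodule.mem_span_singleton.mp ((hTmem s).mp hs) with ⟨c, hc⟩
    have hzlie : ⁅z, π f⁆ = 0 := by rw [← lie_skew z (π f), hzc, neg_zero]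
    rw [← hc, smul_lie, hzlie, smul_zero]
  have hJTC1 : LieSubmodule.toSubmodule JT ≤ C1 := by
    have h1 : JT ≤ ⁅(⊤ : LieIdeal K F), (⊤ : LieIdeal K F)⁆ := LieSubmodule.mono_lie le_top le_top
    have h2 : (⁅(⊤ : LieIdeal K F), (⊤ : LieIdeal K F)⁆ : LieIdeal K F)
        = lowerCentralSeries K F F 1 := (LieModule.lowerCentralSeries_succ K F F 0).symm
    rw [h2] at h1
    exact h1
  -- the two quotient maps
  set mkJ : F →ₗ⁅K⁆ F ⧸ J := auxQuotLieHom K J with hmkJ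
  set mkT : F →ₗ⁅K⁆ F ⧸ JT := auxQuotLieHom K JT with hmkT
  set Mb : Submodule K (F ⧸ J) := M.map mkJ.toLinearMap with hMb
  have hdimπ : auxHopfDim K π = finrank K Mb := rfl
  by_cases hfin : FiniteDimensional K Mb
  swap
  · rw [hdimπ, finrank_of_infinite_dimensional hfin]
    exact Nat.zero_le _
  -- the connecting map φ
  have hkermkT : LinearMap.ker mkT.toLinearMap = LieSubmodule.toSubmodule JT :=
    Submodule.ker_mkQ _
  set φ : (F ⧸ J) →ₗ[K] (F ⧸ JT) :=
    Submodule.liftQ (LieSubmodule.toSubmodule J) mkT.toLinearMap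
      (by rw [hkermkT]; exact hJJT) with hφ
  have hφcomp : φ ∘ₗ mkJ.toLinearMap = mkT.toLinearMap := Submodule.liftQ_mkQ _ _ _
  have hkerφ : LinearMap.ker φ = (LieSubmodule.toSubmodule JT).map mkJ.toLinearMap := by
    rw [hφ, Submodule.ker_liftQ, hkermkT]
    rfl
  -- bound the image of JT in F ⧸ J by a 2-dimensional space
  obtain ⟨x, hx⟩ := hπ a
  obtain ⟨y, hy⟩ := hπ b
  set v1 : F ⧸ J := mkJ ⁅t, x⁆ with hv1
  set v2 : F ⧸ J := mkJ ⁅t, y⁆ with hv2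
  set Sp : Submodule K (F ⧸ J) := (K ∙ v1) ⊔ (K ∙ v2) with hSp
  -- brackets of t with R and with C1 die in F ⧸ J
  have htR : ∀ r ∈ R', mkJ ⁅t, r⁆ = 0 := by
    intro r hr
    rw [auxQuotLieHom_eq_zero_iff]
    have : ⁅t, r⁆ = -⁅r, t⁆ := (lie_skew t r).symm
    rw [this]
    exact neg_mem (LieSubmodule.lie_mem_lie hr (LieSubmodule.mem_top t))
  have htRmem : ∀ r ∈ R', ⁅t, r⁆ ∈ J := by
    intro r hr
    have := htR r hr
    rwa [auxQuotLieHom_eq_zero_iff] at this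
  have hC1top : lowerCentralSeries K F F 1 = ⁅(⊤ : LieIdeal K F), (⊤ : LieIdeal K F)⁆ := by
    rw [show (1 : ℕ) = 0 + 1 from rfl, LieModule.lowerCentralSeries_succ,
      LieModule.lowerCentralSeries_zero]
  have htC1J : ∀ g ∈ lowerCentralSeries K F F 1, ⁅t, g⁆ ∈ J := by
    intro g hg
    rw [hC1top] at hg
    have hg' : g ∈ Submodule.span K
        {m | ∃ p ∈ (⊤ : LieIdeal K F), ∃ n ∈ (⊤ : LieIdeal K F), ⁅p, n⁆ = m} := by
      rw [← LieSubmodule.lieIdeal_oper_eq_linear_span']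
      exact hg
    refine Submodule.span_induction ?_ ?_ ?_ ?_ hg'
    · rintro m ⟨p, -, q, -, rfl⟩
      rw [leibniz_lie]
      apply Submodule.add_mem
      · have htp : ⁅t, p⁆ ∈ R := hJTR (LieSubmodule.lie_mem_lie htT (LieSubmodule.mem_top p))
        exact LieSubmodule.lie_mem_lie htp (LieSubmodule.mem_top q)
      · have htq : ⁅t, q⁆ ∈ R := hJTR (LieSubmodule.lie_mem_lie htT (LieSubmodule.mem_top q))
        have : ⁅p, ⁅t, q⁆⁆ = -⁅⁅t, q⁆, p⁆ := (lie_skew p ⁅t, q⁆).symm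
        rw [this]
        exact neg_mem (LieSubmodule.lie_mem_lie htq (LieSubmodule.mem_top p))
    · rw [lie_zero]; exact Submodule.zero_mem _
    · intro u v _ _ hu hv; rw [lie_add]; exact Submodule.add_mem _ hu hv
    · intro c u _ hu; rw [lie_smul]; exact Submodule.smul_mem _ c hu
  -- decomposition of an arbitrary element of F
  have hdec : ∀ f : F, ∃ (α β : K) (g r : F), g ∈ lowerCentralSeries K F F 1 ∧ r ∈ R' ∧
      f = α • x + β • y + g + r := by
    intro f
    obtain ⟨α, β, g0, hg0, hfg⟩ := hab (π f)
    have hg0' : g0 ∈ (LieSubmodule.toSubmodule (lowerCentralSeries K L L 1)) := hg0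
    rw [← aux_lcs_map π hπ 1] at hg0'
    obtain ⟨g, hg, hgπ₀⟩ := Submodule.mem_map.mp hg0'
    have hgπ : π g = g0 := hgπ₀
    refine ⟨α, β, g, f - (α • x + β • y + g), hg, ?_, by abel⟩
    show f - (α • x + β • y + g) ∈ R
    rw [LieHom.mem_ker, map_sub, map_add, map_add, map_smul,
      map_smul, hx, hy, hgπ, hfg]
    abel
  -- JT maps into Sp
  have hJTSp : (LieSubmodule.toSubmodule JT).map mkJ.toLinearMap ≤ Sp := by
    have hspan : (LieSubmodule.toSubmodule JT)
        = Submodule.span K {m | ∃ p ∈ T, ∃ n ∈ (⊤ : LieIdeal K F), ⁅p, n⁆ = m} := by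
      rw [hJT]; exact LieSubmodule.lieIdeal_oper_eq_linear_span' _ _
    rw [hspan, Submodule.map_span, Submodule.span_le]
    rintro w ⟨m, ⟨p, hp, q, -, rfl⟩, rfl⟩
    -- p = r + c • t
    have hp' : p ∈ R' ⊔ (K ∙ t : Submodule K F) := by rw [← hTRt]; exact hp
    obtain ⟨r, hr, ct, hct, hpeq⟩ := Submodule.mem_sup.mp hp'
    rcases Submodule.mem_span_singleton.mp hct with ⟨c, rfl⟩
    obtain ⟨α, β, g, r₂, hg, hr₂, hqeq⟩ := hdec q
    have hbr1 : ⁅p, q⁆ = ⁅r, q⁆ + c • ⁅t, q⁆ := by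
      rw [← hpeq, add_lie, smul_lie]
    have hbr2 : ⁅t, q⁆ = α • ⁅t, x⁆ + β • ⁅t, y⁆ + ⁅t, g⁆ + ⁅t, r₂⁆ := by
      conv_lhs => rw [hqeq]
      simp only [lie_add, lie_smul]
    have hbr : ⁅p, q⁆ = ⁅r, q⁆ + c • (α • ⁅t, x⁆ + β • ⁅t, y⁆ + ⁅t, g⁆ + ⁅t, r₂⁆) := by
      rw [hbr1, hbr2]
    have hmk0 : mkJ ⁅r, q⁆ = 0 := by
      rw [auxQuotLieHom_eq_zero_iff]
      exact LieSubmodule.lie_mem_lie hr (LieSubmodule.mem_top q)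
    have hmkg : mkJ ⁅t, g⁆ = 0 := by
      rw [auxQuotLieHom_eq_zero_iff]; exact htC1J g hg
    have hmkr₂ : mkJ ⁅t, r₂⁆ = 0 := by
      rw [auxQuotLieHom_eq_zero_iff]; exact htRmem r₂ hr₂
    have : mkJ.toLinearMap ⁅p, q⁆ = c • (α • v1 + β • v2) := by
      show mkJ ⁅p, q⁆ = c • (α • v1 + β • v2)
      rw [hbr, map_add, hmk0, map_smul, map_add, map_add,
        map_add, map_smul, map_smul, hmkg, hmkr₂, hv1, hv2]
      simp only [add_zero, zero_add]
    rw [this]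
    apply Submodule.smul_mem
    apply Submodule.add_mem
    · exact Submodule.mem_sup_left (Submodule.smul_mem _ _ (Submodule.mem_span_singleton_self v1))
    · exact Submodule.mem_sup_right (Submodule.smul_mem _ _ (Submodule.mem_span_singleton_self v2))
  -- Sp is at most 2-dimensional
  have hrank1 : ∀ v : F ⧸ J, finrank K ↥(K ∙ v) ≤ 1 := by
    intro v
    rcases eq_or_ne v 0 with rfl | hv
    · rw [Submodule.span_zero_singleton]
      simp
    · rw [finrank_span_singleton hv]
  have hSpdim : finrank K Sp ≤ 2 := by
    refine le_trans (Submodule.finrank_add_le_finrank_add_finrank _ _) ?_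
    have := hrank1 v1
    have := hrank1 v2
    omega
  haveI hJTbfin : FiniteDimensional K
      ((LieSubmodule.toSubmodule JT).map mkJ.toLinearMap) :=
    Submodule.finiteDimensional_of_le hJTSp
  have hJTb2 : finrank K ((LieSubmodule.toSubmodule JT).map mkJ.toLinearMap) ≤ 2 :=
    le_trans (Submodule.finrank_mono hJTSp) hSpdim
  -- Y and the dimension count
  set Y : Submodule K (F ⧸ JT) := M.map mkT.toLinearMap with hY
  have hMbφ : Mb.map φ = Y := by
    rw [hMb, hY, ← Submodule.map_comp, hφcomp]
  have key1 := aux_finrank_map_add φ Mb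
  rw [hMbφ] at key1
  have hMbker : finrank K ↥(Mb ⊓ LinearMap.ker φ) ≤ 2 := by
    refine le_trans (Submodule.finrank_mono ?_) hJTb2
    rw [← hkerφ]
    exact inf_le_right
  haveI hYfin : FiniteDimensional K Y := by
    rw [← hMbφ]
    infer_instance
  have htY : mkT t ∉ Y := by
    intro hmem
    obtain ⟨m, hm, hme⟩ := Submodule.mem_map.mp hmem
    have hme' : mkT m = mkT t := hme
    have hsub : mkT (t - m) = 0 := by
      rw [map_sub, hme', sub_self]
    rw [auxQuotLieHom_eq_zero_iff] at hsub
    have htm : t - m ∈ R := hJTR hsub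
    have hπt : π t = 0 := by
      have hdecomp : t = (t - m) + m := by abel
      rw [hdecomp, map_add]
      have h1 : π (t - m) = 0 := LieHom.mem_ker.mp htm
      have h2 : π m = 0 := LieHom.mem_ker.mp (hMR hm)
      rw [h1, h2, add_zero]
    rw [ht2] at hπt
    exact hz0 hπt
  have hTC : LieSubmodule.toSubmodule (π'.ker ⊓ lowerCentralSeries K F F 1)
      = M ⊔ (K ∙ t : Submodule K F) := by
    rw [LieSubmodule.inf_toSubmodule]
    apply le_antisymm
    · rintro s hsmem
      obtain ⟨hsT, hsC⟩ := Submodule.mem_inf.mp hsmem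
      have hs' : s ∈ R' ⊔ (K ∙ t : Submodule K F) := by rw [← hTRt]; exact hsT
      obtain ⟨r, hr, ct, hct, hseq⟩ := Submodule.mem_sup.mp hs'
      rcases Submodule.mem_span_singleton.mp hct with ⟨c, rfl⟩
      have hrC : r ∈ C1 := by
        have hre : r = s - c • t := by rw [← hseq]; abel
        rw [hre]
        exact Submodule.sub_mem _ hsC (Submodule.smul_mem _ c htC1)
      have hrM : r ∈ M := by rw [hM']; exact Submodule.mem_inf.mpr ⟨hr, hrC⟩
      rw [← hseq]
      exact Submodule.add_mem _ (Submodule.mem_sup_left hrM)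
        (Submodule.mem_sup_right (Submodule.smul_mem _ c (Submodule.mem_span_singleton_self t)))
    · apply sup_le
      · intro s hs
        refine Submodule.mem_inf.mpr ⟨?_, hMC hs⟩
        exact hRT (hMR hs)
      · rw [Submodule.span_le, Set.singleton_subset_iff]
        exact Submodule.mem_inf.mpr ⟨htT, htC1⟩
  have hmapTC :
      (LieSubmodule.toSubmodule (π'.ker ⊓ lowerCentralSeries K F F 1)).map mkT.toLinearMap
        = Y ⊔ (K ∙ (mkT t)) := by
    rw [hTC, Submodule.map_sup]
    congr 1
    rw [Submodule.map_span, Set.image_singleton]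
    rfl
  have hdimπ' : auxHopfDim K π' = finrank K ↥(Y ⊔ (K ∙ (mkT t))) := by
    have e : auxHopfDim K π' = finrank K
        ((LieSubmodule.toSubmodule (π'.ker ⊓ lowerCentralSeries K F F 1)).map
          mkT.toLinearMap) := rfl
    rw [e, hmapTC]
  rw [hdimπ, hdimπ', aux_finrank_sup_singleton htY]
  omega

end AuxStep


section AuxBase
open LieModule Function Module

variable {K : Type} [Field K] {F L : Type} [LieRing F] [LieAlgebra K F]
  [LieRing L] [LieAlgebra K L]

lemma aux_base4 [FiniteDimensional K L]
    (hnil : ∃ c, lowerCentralSeries K L L c = ⊥)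
    (hn : finrank K L = 4)
    (hm : finrank K (LieSubmodule.toSubmodule (lowerCentralSeries K L L 1)) = 2)
    (π : F →ₗ⁅K⁆ L) (hπ : Surjective π) :
    auxHopfDim K π ≤ 2 := by
  classical
  by_contra hcon
  push_neg at hcon
  obtain ⟨c, hc⟩ := hnil
  have htopF : ∀ v : F, v ∈ lowerCentralSeries K F F 0 := by
    intro v; rw [LieModule.lowerCentralSeries_zero]; exact LieSubmodule.mem_top v
  have htopL : ∀ v : L, v ∈ lowerCentralSeries K L L 0 := by
    intro v; rw [LieModule.lowerCentralSeries_zero]; exact LieSubmodule.mem_top v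
  -- L-side data
  set D1 : Submodule K L := LieSubmodule.toSubmodule (lowerCentralSeries K L L 1) with hD1
  set D2 : Submodule K L := LieSubmodule.toSubmodule (lowerCentralSeries K L L 2) with hD2
  set D3 : Submodule K L := LieSubmodule.toSubmodule (lowerCentralSeries K L L 3) with hD3
  have hquot : finrank K (L ⧸ (lowerCentralSeries K L L 1 : LieIdeal K L)) = 2 := by
    have h := Submodule.finrank_quotient_add_finrank D1
    have e : finrank K (L ⧸ (lowerCentralSeries K L L 1 : LieIdeal K L))
        = finrank K (L ⧸ D1) := rfl
    rw [e]
    omega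
  obtain ⟨a, b, hab⟩ := aux_gen_pair (K := K) L hquot
  have hD21 : D2 ≤ D1 := by
    rw [hD1, hD2]
    exact antitone_lowerCentralSeries K L L (by omega)
  have hD32 : D3 ≤ D2 := by
    rw [hD2, hD3]
    exact antitone_lowerCentralSeries K L L (by omega)
  have hD1ne : lowerCentralSeries K L L 1 ≠ ⊥ := by
    intro h
    rw [hD1, h] at hm
    simp [LieSubmodule.bot_toSubmodule] at hm
  have hneq12 : lowerCentralSeries K L L 2 ≠ lowerCentralSeries K L L 1 := by
    intro h
    exact hD1ne (aux_lcs_stab hc h)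
  -- D1 = span [a,b] + D2
  have hD1span : D1 ≤ (K ∙ ⁅a, b⁆) ⊔ D2 := by
    set S : Submodule K L := (K ∙ ⁅a, b⁆) ⊔ D2 with hS
    have hD2S : D2 ≤ S := le_sup_right
    have habS : ⁅a, b⁆ ∈ S :=
      Submodule.mem_sup_left (Submodule.mem_span_singleton_self _)
    have hC1topL : lowerCentralSeries K L L 1
        = ⁅(⊤ : LieIdeal K L), (⊤ : LieIdeal K L)⁆ := by
      rw [show (1 : ℕ) = 0 + 1 from rfl, LieModule.lowerCentralSeries_succ,
        LieModule.lowerCentralSeries_zero]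
    have hspan : D1 = Submodule.span K
        {m | ∃ p ∈ (⊤ : LieIdeal K L), ∃ n ∈ (⊤ : LieIdeal K L), ⁅p, n⁆ = m} := by
      rw [hD1, hC1topL]
      exact LieSubmodule.lieIdeal_oper_eq_linear_span' _ _
    rw [hspan, Submodule.span_le]
    rintro m ⟨p, -, q, -, rfl⟩
    show ⁅p, q⁆ ∈ S
    obtain ⟨α, β, g, hg, hp⟩ := hab p
    obtain ⟨γ, δ, g', hg', hq⟩ := hab q
    have k1 : ⁅p, q⁆ = α • ⁅a, q⁆ + β • ⁅b, q⁆ + ⁅g, q⁆ := by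
      conv_lhs => rw [hp]
      rw [add_lie, add_lie, smul_lie, smul_lie]
    have k2 : ∀ v : L, ⁅v, q⁆ = γ • ⁅v, a⁆ + δ • ⁅v, b⁆ + ⁅v, g'⁆ := by
      intro v
      conv_lhs => rw [hq]
      rw [lie_add, lie_add, lie_smul, lie_smul]
    rw [k1, k2 a, k2 b]
    have haa : ⁅a, a⁆ ∈ S := by rw [lie_self]; exact S.zero_mem
    have hbb : ⁅b, b⁆ ∈ S := by rw [lie_self]; exact S.zero_mem
    have hba : ⁅b, a⁆ ∈ S := by
      have : ⁅b, a⁆ = -⁅a, b⁆ := (lie_skew b a).symm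
      rw [this]; exact neg_mem habS
    have hag : ⁅a, g'⁆ ∈ S := hD2S (aux_lcs_lie_mem 1 0 a g' (htopL a) hg')
    have hbg : ⁅b, g'⁆ ∈ S := hD2S (aux_lcs_lie_mem 1 0 b g' (htopL b) hg')
    have hgq : ⁅g, q⁆ ∈ S := hD2S (aux_lcs_lie_mem 0 1 g q hg (htopL q))
    exact S.add_mem (S.add_mem
      (S.smul_mem α (S.add_mem (S.add_mem (S.smul_mem γ haa) (S.smul_mem δ habS)) hag))
      (S.smul_mem β (S.add_mem (S.add_mem (S.smul_mem γ hba) (S.smul_mem δ hbb)) hbg)))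
      hgq
  have hrank1 : ∀ (V : Type) (_ : AddCommGroup V) (_ : Module K V) (v : V),
      finrank K ↥(K ∙ v) ≤ 1 := by
    intro V _ _ v
    rcases eq_or_ne v 0 with rfl | hv
    · rw [Submodule.span_zero_singleton]; simp
    · rw [finrank_span_singleton hv]
  have hfinD2 : finrank K D2 = 1 := by
    have h1 : finrank K D1 ≤ finrank K ↥((K ∙ ⁅a, b⁆) ⊔ D2) :=
      Submodule.finrank_mono hD1span
    have h2 : finrank K ↥((K ∙ ⁅a, b⁆) ⊔ D2) ≤ finrank K ↥(K ∙ ⁅a, b⁆) + finrank K D2 :=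
      Submodule.finrank_add_le_finrank_add_finrank _ _
    have h3 := hrank1 L inferInstance inferInstance ⁅a, b⁆
    have hlt : D2 < D1 := by
      refine lt_of_le_of_ne hD21 ?_
      intro h
      apply hneq12
      rw [← LieSubmodule.toSubmodule_inj]
      exact h
    have h4 : finrank K D2 < finrank K D1 := Submodule.finrank_lt_finrank_of_lt hlt
    omega
  have hD3bot : lowerCentralSeries K L L 3 = ⊥ := by
    by_cases h32 : lowerCentralSeries K L L 3 = lowerCentralSeries K L L 2
    · rw [h32]
      exact aux_lcs_stab hc h32
    · have hlt : D3 < D2 := by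
        refine lt_of_le_of_ne hD32 ?_
        intro h
        apply h32
        rw [← LieSubmodule.toSubmodule_inj]
        exact h
      have h4 : finrank K D3 < finrank K D2 := Submodule.finrank_lt_finrank_of_lt hlt
      have : finrank K D3 = 0 := by omega
      have hbot : D3 = ⊥ := by
        rw [← Submodule.finrank_eq_zero (R := K) (M := L)]
        exact this
      rw [← LieSubmodule.toSubmodule_inj]
      rw [hD3] at hbot
      rw [hbot, LieSubmodule.bot_toSubmodule]
  have habD2 : ⁅a, b⁆ ∉ D2 := by
    intro h
    have hle : D1 ≤ D2 := by
      refine le_trans hD1span (sup_le ?_ le_rfl)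
      rw [Submodule.span_le, Set.singleton_subset_iff]
      exact h
    have := Submodule.finrank_mono hle
    omega
  -- F-side data
  set R : LieIdeal K F := π.ker with hR
  set J : LieIdeal K F := ⁅R, (⊤ : LieIdeal K F)⁆ with hJ
  set mkJ : F →ₗ⁅K⁆ F ⧸ J := auxQuotLieHom K J with hmkJ
  set C1 : Submodule K F := LieSubmodule.toSubmodule (lowerCentralSeries K F F 1) with hC1
  set C2 : Submodule K F := LieSubmodule.toSubmodule (lowerCentralSeries K F F 2) with hC2
  set C3 : Submodule K F := LieSubmodule.toSubmodule (lowerCentralSeries K F F 3) with hC3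
  set M : Submodule K F :=
    LieSubmodule.toSubmodule (π.ker ⊓ lowerCentralSeries K F F 1) with hM
  obtain ⟨x, hx⟩ := hπ a
  obtain ⟨y, hy⟩ := hπ b
  set u : F := ⁅x, y⁆ with hu
  set A : F := ⁅x, u⁆ with hA
  set B : F := ⁅y, u⁆ with hB
  set xe : F ⧸ J := mkJ x with hxe
  set ye : F ⧸ J := mkJ y with hye
  set ue : F ⧸ J := mkJ u with hue
  set ae : F ⧸ J := mkJ A with hae
  set be : F ⧸ J := mkJ B with hbe
  set e1 : F ⧸ J := mkJ ⁅x, A⁆ with he1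
  set e2 : F ⧸ J := mkJ ⁅y, A⁆ with he2
  set e3 : F ⧸ J := mkJ ⁅y, B⁆ with he3
  have hC1topF : lowerCentralSeries K F F 1
      = ⁅(⊤ : LieIdeal K F), (⊤ : LieIdeal K F)⁆ := by
    rw [show (1 : ℕ) = 0 + 1 from rfl, LieModule.lowerCentralSeries_succ,
      LieModule.lowerCentralSeries_zero]
  have hu1 : u ∈ lowerCentralSeries K F F 1 := by
    rw [hC1topF]
    exact LieSubmodule.lie_mem_lie (LieSubmodule.mem_top x) (LieSubmodule.mem_top y)
  have hA2 : A ∈ lowerCentralSeries K F F 2 := by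
    rw [LieModule.lowerCentralSeries_succ]
    exact LieSubmodule.lie_mem_lie (LieSubmodule.mem_top x) hu1
  have hB2 : B ∈ lowerCentralSeries K F F 2 := by
    rw [LieModule.lowerCentralSeries_succ]
    exact LieSubmodule.lie_mem_lie (LieSubmodule.mem_top y) hu1
  have hxA3 : ⁅x, A⁆ ∈ lowerCentralSeries K F F 3 := by
    rw [LieModule.lowerCentralSeries_succ]
    exact LieSubmodule.lie_mem_lie (LieSubmodule.mem_top x) hA2
  have hyA3 : ⁅y, A⁆ ∈ lowerCentralSeries K F F 3 := by
    rw [LieModule.lowerCentralSeries_succ]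
    exact LieSubmodule.lie_mem_lie (LieSubmodule.mem_top y) hA2
  have hyB3 : ⁅y, B⁆ ∈ lowerCentralSeries K F F 3 := by
    rw [LieModule.lowerCentralSeries_succ]
    exact LieSubmodule.lie_mem_lie (LieSubmodule.mem_top y) hB2
  -- γ₄(L) = 0, so γ₄(F) ⊆ R and γ₅(F) ⊆ J
  have hlcs3R : ∀ w ∈ lowerCentralSeries K F F 3, w ∈ R := by
    intro w hw
    have h1 : π.toLinearMap w ∈
        (LieSubmodule.toSubmodule (lowerCentralSeries K F F 3)).map π.toLinearMap :=
      Submodule.mem_map_of_mem hw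
    rw [aux_lcs_map π hπ 3] at h1
    rw [hD3bot, LieSubmodule.bot_toSubmodule] at h1
    have h2 : π w = 0 := h1
    rw [hR, LieHom.mem_ker]
    exact h2
  have hmkJ0 : ∀ w ∈ J, mkJ w = 0 := by
    intro w hw
    rw [hmkJ, auxQuotLieHom_eq_zero_iff]
    exact hw
  have hG5 : ∀ w ∈ lowerCentralSeries K F F 4, mkJ w = 0 := by
    intro w hw
    apply hmkJ0
    have hle : lowerCentralSeries K F F 4 ≤ J := by
      have h1 : lowerCentralSeries K F F 4
          = ⁅(⊤ : LieIdeal K F), lowerCentralSeries K F F 3⁆ :=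
        LieModule.lowerCentralSeries_succ K F F 3
      have h2 : (⁅(⊤ : LieIdeal K F), lowerCentralSeries K F F 3⁆ :
          LieIdeal K F) ≤ ⁅(⊤ : LieIdeal K F), R⁆ :=
        LieSubmodule.mono_lie le_rfl (fun w hw => hlcs3R w hw)
      have h3 : (⁅(⊤ : LieIdeal K F), R⁆ : LieIdeal K F) = ⁅R, (⊤ : LieIdeal K F)⁆ :=
        LieSubmodule.lie_comm _ _
      rw [h1, hJ, ← h3]
      exact h2
    exact hle hw
  -- centrality of the image of R
  have hRcE : ∀ (v : F ⧸ J), ∀ r ∈ R, ⁅v, mkJ r⁆ = 0 := by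
    intro v r hr
    obtain ⟨f, rfl⟩ := auxQuotLieHom_surj K J v
    rw [← LieHom.map_lie]
    apply hmkJ0
    have : ⁅f, r⁆ = -⁅r, f⁆ := (lie_skew f r).symm
    rw [this]
    exact neg_mem (LieSubmodule.lie_mem_lie hr (LieSubmodule.mem_top f))
  have hRcE' : ∀ (v : F ⧸ J), ∀ r ∈ R, ⁅mkJ r, v⁆ = 0 := by
    intro v r hr
    have h : ⁅mkJ r, v⁆ = -⁅v, mkJ r⁆ := (lie_skew _ _).symm
    rw [h, hRcE v r hr, neg_zero]
  -- the projection to L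
  have hJR : LieSubmodule.toSubmodule J ≤ LinearMap.ker π.toLinearMap := by
    rw [← LieHom.ker_toSubmodule]
    intro w hw
    exact (LieSubmodule.lie_le_left R ⊤) hw
  set πb : (F ⧸ J) →ₗ[K] L :=
    Submodule.liftQ (LieSubmodule.toSubmodule J) π.toLinearMap hJR with hπb
  have hπbmk : ∀ f : F, πb (mkJ f) = π f := fun f => rfl
  -- decomposition of elements of F ⧸ J
  have hdec : ∀ w : F ⧸ J, ∃ (α β : K) (g r : F), g ∈ lowerCentralSeries K F F 1 ∧
      r ∈ R ∧ w = α • xe + β • ye + mkJ g + mkJ r := by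
    intro w
    obtain ⟨f, rfl⟩ := auxQuotLieHom_surj K J w
    obtain ⟨α, β, g0, hg0, hfg⟩ := hab (π f)
    have hg0' : g0 ∈ (LieSubmodule.toSubmodule (lowerCentralSeries K L L 1)) := hg0
    rw [← aux_lcs_map π hπ 1] at hg0'
    obtain ⟨g, hg, hgπ₀⟩ := Submodule.mem_map.mp hg0'
    have hgπ : π g = g0 := hgπ₀
    refine ⟨α, β, g, f - (α • x + β • y + g), hg, ?_, ?_⟩
    · rw [hR, LieHom.mem_ker, map_sub, map_add, map_add, map_smul,
        map_smul, hx, hy, hgπ, hfg]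
      abel
    · rw [hxe, hye, ← map_smul, ← map_smul, ← map_add, ← map_add,
        ← map_add]
      congr 1
      abel
  -- images of the lower central series
  set G2 : Submodule K (F ⧸ J) := C1.map mkJ.toLinearMap with hG2
  set G3 : Submodule K (F ⧸ J) := C2.map mkJ.toLinearMap with hG3
  set G4 : Submodule K (F ⧸ J) := C3.map mkJ.toLinearMap with hG4
  have hmemG2 : ∀ v ∈ lowerCentralSeries K F F 1, mkJ v ∈ G2 :=
    fun v hv => Submodule.mem_map_of_mem hv
  have hmemG3 : ∀ v ∈ lowerCentralSeries K F F 2, mkJ v ∈ G3 :=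
    fun v hv => Submodule.mem_map_of_mem hv
  have hmemG4 : ∀ v ∈ lowerCentralSeries K F F 3, mkJ v ∈ G4 :=
    fun v hv => Submodule.mem_map_of_mem hv
  set S2 : Submodule K (F ⧸ J) := (K ∙ ue) ⊔ G3 with hS2
  set S3 : Submodule K (F ⧸ J) := (K ∙ ae) ⊔ (K ∙ be) ⊔ G4 with hS3
  set S4 : Submodule K (F ⧸ J) := Submodule.span K {e1, e2, e3} with hS4
  -- bracket identities
  have hlie_xy : ⁅xe, ye⁆ = ue := (LieHom.map_lie mkJ x y).symm
  have hlie_xu : ⁅xe, ue⁆ = ae := (LieHom.map_lie mkJ x u).symm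
  have hlie_yu : ⁅ye, ue⁆ = be := (LieHom.map_lie mkJ y u).symm
  have hlie_xA : ⁅xe, ae⁆ = e1 := (LieHom.map_lie mkJ x A).symm
  have hlie_yA : ⁅ye, ae⁆ = e2 := (LieHom.map_lie mkJ y A).symm
  have hlie_yB : ⁅ye, be⁆ = e3 := (LieHom.map_lie mkJ y B).symm
  have hJac : ⁅xe, be⁆ = e2 := by
    have h := leibniz_lie xe ye ue
    rw [hlie_xy, lie_self, zero_add, hlie_xu, hlie_yA] at h
    rw [← hlie_yu]
    exact h
  -- ladder, level 2: all brackets lie in S2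
  have ladder2 : ∀ w1 w2 : F ⧸ J, ⁅w1, w2⁆ ∈ S2 := by
    intro w1 w2
    obtain ⟨α, β, g, r, hg, hr, h1⟩ := hdec w1
    obtain ⟨γ, δ, g', r', hg', hr', h2⟩ := hdec w2
    have k1 : ⁅w1, w2⁆ = α • ⁅xe, w2⁆ + β • ⁅ye, w2⁆ + ⁅mkJ g, w2⁆ := by
      conv_lhs => rw [h1]
      rw [add_lie, hRcE' w2 r hr, add_zero, add_lie, add_lie, smul_lie, smul_lie]
    have k2 : ∀ v : F ⧸ J, ⁅v, w2⁆ = γ • ⁅v, xe⁆ + δ • ⁅v, ye⁆ + ⁅v, mkJ g'⁆ := by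
      intro v
      conv_lhs => rw [h2]
      rw [lie_add, hRcE v r' hr', add_zero, lie_add, lie_add, lie_smul, lie_smul]
    rw [k1, k2 xe, k2 ye]
    have hueS : ue ∈ S2 := Submodule.mem_sup_left (Submodule.mem_span_singleton_self _)
    have hG3S : G3 ≤ S2 := le_sup_right
    have hxx : ⁅xe, xe⁆ ∈ S2 := by rw [lie_self]; exact S2.zero_mem
    have hyy : ⁅ye, ye⁆ ∈ S2 := by rw [lie_self]; exact S2.zero_mem
    have hxy2 : ⁅xe, ye⁆ ∈ S2 := by rw [hlie_xy]; exact hueS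
    have hyx : ⁅ye, xe⁆ ∈ S2 := by
      have h : ⁅ye, xe⁆ = -⁅xe, ye⁆ := (lie_skew ye xe).symm
      rw [h, hlie_xy]
      exact neg_mem hueS
    have hxg : ⁅xe, mkJ g'⁆ ∈ S2 := by
      rw [← LieHom.map_lie]
      exact hG3S (hmemG3 _ (aux_lcs_lie_mem 1 0 x g' (htopF x) hg'))
    have hyg : ⁅ye, mkJ g'⁆ ∈ S2 := by
      rw [← LieHom.map_lie]
      exact hG3S (hmemG3 _ (aux_lcs_lie_mem 1 0 y g' (htopF y) hg'))
    have hgw : ⁅mkJ g, w2⁆ ∈ S2 := by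
      rw [k2 (mkJ g)]
      have hgx : ⁅mkJ g, xe⁆ ∈ S2 := by
        rw [← LieHom.map_lie]
        exact hG3S (hmemG3 _ (aux_lcs_lie_mem 0 1 g x hg (htopF x)))
      have hgy : ⁅mkJ g, ye⁆ ∈ S2 := by
        rw [← LieHom.map_lie]
        exact hG3S (hmemG3 _ (aux_lcs_lie_mem 0 1 g y hg (htopF y)))
      have hgg : ⁅mkJ g, mkJ g'⁆ ∈ S2 := by
        rw [← LieHom.map_lie]
        refine hG3S (hmemG3 _ ?_)
        have h := aux_lcs_lie_mem 1 1 g g' hg hg'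
        exact antitone_lowerCentralSeries K F F (by omega) h
      exact S2.add_mem (S2.add_mem (S2.smul_mem γ hgx) (S2.smul_mem δ hgy)) hgg
    exact S2.add_mem (S2.add_mem
      (S2.smul_mem α (S2.add_mem (S2.add_mem (S2.smul_mem γ hxx) (S2.smul_mem δ hxy2)) hxg))
      (S2.smul_mem β (S2.add_mem (S2.add_mem (S2.smul_mem γ hyx) (S2.smul_mem δ hyy)) hyg)))
      hgw
  -- ladder, level 3
  have ladder3 : ∀ w1 w2 : F ⧸ J, w2 ∈ S2 → ⁅w1, w2⁆ ∈ S3 := by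
    intro w1 w2 hw2
    obtain ⟨p, hp, h3, hh3, rfl⟩ := Submodule.mem_sup.mp hw2
    rcases Submodule.mem_span_singleton.mp hp with ⟨cu, rfl⟩
    have haeS : ae ∈ S3 :=
      Submodule.mem_sup_left (Submodule.mem_sup_left (Submodule.mem_span_singleton_self _))
    have hbeS : be ∈ S3 :=
      Submodule.mem_sup_left (Submodule.mem_sup_right (Submodule.mem_span_singleton_self _))
    have hG4S : G4 ≤ S3 := le_sup_right
    have claimA : ⁅w1, ue⁆ ∈ S3 := by
      obtain ⟨α, β, g, r, hg, hr, h1⟩ := hdec w1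
      have k1 : ⁅w1, ue⁆ = α • ⁅xe, ue⁆ + β • ⁅ye, ue⁆ + ⁅mkJ g, ue⁆ := by
        conv_lhs => rw [h1]
        rw [add_lie, hRcE' ue r hr, add_zero, add_lie, add_lie, smul_lie, smul_lie]
      rw [k1, hlie_xu, hlie_yu]
      have hgu : ⁅mkJ g, ue⁆ ∈ S3 := by
        rw [← LieHom.map_lie]
        exact hG4S (hmemG4 _ (aux_lcs_lie_mem 1 1 g u hg hu1))
      exact S3.add_mem (S3.add_mem (S3.smul_mem α haeS) (S3.smul_mem β hbeS)) hgu
    have claimB : ⁅w1, h3⁆ ∈ S3 := by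
      obtain ⟨n, hn, rfl⟩ := Submodule.mem_map.mp hh3
      obtain ⟨f, rfl⟩ := auxQuotLieHom_surj K J w1
      have he : (mkJ.toLinearMap n : F ⧸ J) = mkJ n := rfl
      rw [he, ← LieHom.map_lie]
      exact hG4S (hmemG4 _ (aux_lcs_lie_mem 2 0 f n (htopF f) hn))
    rw [lie_add, lie_smul]
    exact S3.add_mem (S3.smul_mem cu claimA) claimB
  -- ladder, level 4
  have ladder4 : ∀ w1 w2 : F ⧸ J, w2 ∈ S3 → ⁅w1, w2⁆ ∈ S4 := by
    intro w1 w2 hw2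
    obtain ⟨p, hp, h4, hh4, rfl⟩ := Submodule.mem_sup.mp hw2
    obtain ⟨p1, hp1, p2, hp2, rfl⟩ := Submodule.mem_sup.mp hp
    rcases Submodule.mem_span_singleton.mp hp1 with ⟨c1, rfl⟩
    rcases Submodule.mem_span_singleton.mp hp2 with ⟨c2, rfl⟩
    have he1S : e1 ∈ S4 := Submodule.subset_span (by simp)
    have he2S : e2 ∈ S4 := Submodule.subset_span (by simp)
    have he3S : e3 ∈ S4 := Submodule.subset_span (by simp)
    have claimA : ⁅w1, ae⁆ ∈ S4 := by
      obtain ⟨α, β, g, r, hg, hr, h1⟩ := hdec w1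
      have k1 : ⁅w1, ae⁆ = α • ⁅xe, ae⁆ + β • ⁅ye, ae⁆ + ⁅mkJ g, ae⁆ := by
        conv_lhs => rw [h1]
        rw [add_lie, hRcE' ae r hr, add_zero, add_lie, add_lie, smul_lie, smul_lie]
      have hgA : ⁅mkJ g, ae⁆ = 0 := by
        rw [← LieHom.map_lie]
        exact hG5 _ (aux_lcs_lie_mem 2 1 g A hg hA2)
      rw [k1, hlie_xA, hlie_yA, hgA, add_zero]
      exact S4.add_mem (S4.smul_mem α he1S) (S4.smul_mem β he2S)
    have claimB : ⁅w1, be⁆ ∈ S4 := by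
      obtain ⟨α, β, g, r, hg, hr, h1⟩ := hdec w1
      have k1 : ⁅w1, be⁆ = α • ⁅xe, be⁆ + β • ⁅ye, be⁆ + ⁅mkJ g, be⁆ := by
        conv_lhs => rw [h1]
        rw [add_lie, hRcE' be r hr, add_zero, add_lie, add_lie, smul_lie, smul_lie]
      have hgB : ⁅mkJ g, be⁆ = 0 := by
        rw [← LieHom.map_lie]
        exact hG5 _ (aux_lcs_lie_mem 2 1 g B hg hB2)
      rw [k1, hJac, hlie_yB, hgB, add_zero]
      exact S4.add_mem (S4.smul_mem α he2S) (S4.smul_mem β he3S)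
    have claimC : ⁅w1, h4⁆ = 0 := by
      obtain ⟨n, hn, rfl⟩ := Submodule.mem_map.mp hh4
      obtain ⟨f, rfl⟩ := auxQuotLieHom_surj K J w1
      have he : (mkJ.toLinearMap n : F ⧸ J) = mkJ n := rfl
      rw [he, ← LieHom.map_lie]
      exact hG5 _ (aux_lcs_lie_mem 3 0 f n (htopF f) hn)
    rw [lie_add, lie_add, lie_smul, lie_smul, claimC, add_zero]
    exact S4.add_mem (S4.smul_mem c1 claimA) (S4.smul_mem c2 claimB)
  -- the inclusions G2 ≤ S2, G3 ≤ S3, G4 ≤ S4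
  have hspan1 : C1 = Submodule.span K
      {m | ∃ p ∈ (⊤ : LieIdeal K F), ∃ n ∈ (⊤ : LieIdeal K F), ⁅p, n⁆ = m} := by
    rw [hC1, hC1topF]
    exact LieSubmodule.lieIdeal_oper_eq_linear_span' _ _
  have hspan2 : C2 = Submodule.span K
      {m | ∃ p ∈ (⊤ : LieIdeal K F), ∃ n ∈ lowerCentralSeries K F F 1, ⁅p, n⁆ = m} := by
    rw [hC2, LieModule.lowerCentralSeries_succ]
    exact LieSubmodule.lieIdeal_oper_eq_linear_span' _ _
  have hspan3 : C3 = Submodule.span K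
      {m | ∃ p ∈ (⊤ : LieIdeal K F), ∃ n ∈ lowerCentralSeries K F F 2, ⁅p, n⁆ = m} := by
    rw [hC3, LieModule.lowerCentralSeries_succ]
    exact LieSubmodule.lieIdeal_oper_eq_linear_span' _ _
  have hG2le : G2 ≤ S2 := by
    rw [hG2, hspan1, Submodule.map_span, Submodule.span_le]
    rintro w ⟨m, ⟨p, -, q, -, rfl⟩, rfl⟩
    have he : (mkJ.toLinearMap ⁅p, q⁆ : F ⧸ J) = mkJ ⁅p, q⁆ := rfl
    rw [he, LieHom.map_lie]
    exact ladder2 _ _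
  have hG3le : G3 ≤ S3 := by
    rw [hG3, hspan2, Submodule.map_span, Submodule.span_le]
    rintro w ⟨m, ⟨p, -, q, hq, rfl⟩, rfl⟩
    have he : (mkJ.toLinearMap ⁅p, q⁆ : F ⧸ J) = mkJ ⁅p, q⁆ := rfl
    rw [he, LieHom.map_lie]
    exact ladder3 _ _ (hG2le (hmemG2 q hq))
  have hG4le : G4 ≤ S4 := by
    rw [hG4, hspan3, Submodule.map_span, Submodule.span_le]
    rintro w ⟨m, ⟨p, -, q, hq, rfl⟩, rfl⟩
    have he : (mkJ.toLinearMap ⁅p, q⁆ : F ⧸ J) = mkJ ⁅p, q⁆ := rfl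
    rw [he, LieHom.map_lie]
    exact ladder4 _ _ (hG3le (hmemG3 q hq))
  -- finite dimensionality
  haveI hS4fin : FiniteDimensional K S4 := by
    rw [hS4]
    exact FiniteDimensional.span_of_finite K (Set.toFinite _)
  set SS : Submodule K (F ⧸ J) := (K ∙ ae) ⊔ (K ∙ be) ⊔ S4 with hSS
  haveI hSSfin : FiniteDimensional K SS := by
    rw [hSS]
    infer_instance
  have hG3SS : G3 ≤ SS := by
    refine le_trans hG3le ?_
    rw [hS3, hSS]
    exact sup_le_sup le_rfl hG4le
  haveI hG3fin : FiniteDimensional K G3 := Submodule.finiteDimensional_of_le hG3SS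
  -- M maps into W := G3 ⊓ Rb
  set Rb : Submodule K (F ⧸ J) :=
    (LieSubmodule.toSubmodule R).map mkJ.toLinearMap with hRb
  set W : Submodule K (F ⧸ J) := G3 ⊓ Rb with hW
  set Mb : Submodule K (F ⧸ J) := M.map mkJ.toLinearMap with hMb
  have hdimπ : auxHopfDim K π = finrank K Mb := rfl
  have hπbG3D2 : ∀ v ∈ G3, πb v ∈ D2 := by
    intro v hv
    obtain ⟨n, hn, rfl⟩ := Submodule.mem_map.mp hv
    have he : πb (mkJ.toLinearMap n) = π.toLinearMap n := rfl
    rw [he]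
    have h1 : π.toLinearMap n ∈
        (LieSubmodule.toSubmodule (lowerCentralSeries K F F 2)).map π.toLinearMap :=
      Submodule.mem_map_of_mem hn
    rw [aux_lcs_map π hπ 2] at h1
    exact h1
  have hMbW : Mb ≤ W := by
    rintro w hw
    obtain ⟨m, hm, rfl⟩ := Submodule.mem_map.mp hw
    have hmR : m ∈ R := (LieSubmodule.mem_inf _ _ _).mp hm |>.1
    have hmC1 : m ∈ lowerCentralSeries K F F 1 := (LieSubmodule.mem_inf _ _ _).mp hm |>.2
    have he : (mkJ.toLinearMap m : F ⧸ J) = mkJ m := rfl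
    rw [he]
    refine Submodule.mem_inf.mpr ⟨?_, Submodule.mem_map_of_mem hmR⟩
    -- mkJ m ∈ G3
    have hmG2 : mkJ m ∈ S2 := hG2le (hmemG2 m hmC1)
    obtain ⟨p, hp, h3, hh3, hsum⟩ := Submodule.mem_sup.mp hmG2
    rcases Submodule.mem_span_singleton.mp hp with ⟨cu, rfl⟩
    have hπ0 : πb (mkJ m) = 0 := by
      rw [hπbmk]
      exact LieHom.mem_ker.mp hmR
    have hπue : πb ue = ⁅a, b⁆ := by
      rw [hue, hπbmk, hu, LieHom.map_lie, hx, hy]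
    have hπh3 : πb h3 ∈ D2 := hπbG3D2 h3 hh3
    have hcomb : cu • ⁅a, b⁆ + πb h3 = 0 := by
      rw [← hπue, ← map_smul, ← map_add, hsum, hπ0]
    have hmemD2 : cu • ⁅a, b⁆ ∈ D2 := by
      have he2 : cu • ⁅a, b⁆ = -πb h3 := eq_neg_of_add_eq_zero_left hcomb
      rw [he2]
      exact neg_mem hπh3
    have hcu0 : cu = 0 := by
      by_contra hcu
      apply habD2
      have h5 := D2.smul_mem cu⁻¹ hmemD2
      rwa [smul_smul, inv_mul_cancel₀ hcu, one_smul] at h5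
    rw [← hsum, hcu0, zero_smul, zero_add]
    exact hh3
  -- dimension count for G3
  haveI hWfin : FiniteDimensional K W := Submodule.finiteDimensional_of_le inf_le_left
  have h3W : 3 ≤ finrank K W := by
    have h1 : 3 ≤ finrank K Mb := by
      rw [hdimπ] at hcon
      omega
    exact le_trans h1 (Submodule.finrank_mono hMbW)
  have hmapG3 : G3.map πb = D2 := by
    rw [hG3, ← Submodule.map_comp]
    have he : πb ∘ₗ mkJ.toLinearMap = π.toLinearMap := Submodule.liftQ_mkQ _ _ _
    rw [he, hC2, aux_lcs_map π hπ 2]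
  have hkerπb : LinearMap.ker πb = Rb := by
    rw [hπb, Submodule.ker_liftQ, hRb, ← LieHom.ker_toSubmodule]
    rfl
  have hcount := aux_finrank_map_add πb G3
  rw [hmapG3, hkerπb] at hcount
  have hcount' : finrank K D2 + finrank K W = finrank K G3 := by
    rw [hW]
    exact hcount
  -- rank-nullity for Φ on G3
  set Φ : (F ⧸ J) →ₗ[K] (F ⧸ J) × (F ⧸ J) :=
    LinearMap.prod (LieModule.toEnd K (F ⧸ J) (F ⧸ J) xe)
      (LieModule.toEnd K (F ⧸ J) (F ⧸ J) ye) with hΦ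
  have hΦapply : ∀ w : F ⧸ J, Φ w = (⁅xe, w⁆, ⁅ye, w⁆) := fun w => rfl
  set Φ3 : ↥G3 →ₗ[K] (F ⧸ J) × (F ⧸ J) := Φ ∘ₗ G3.subtype with hΦ3
  have hrn := LinearMap.finrank_range_add_finrank_ker Φ3
  have hWker : Submodule.comap G3.subtype W ≤ LinearMap.ker Φ3 := by
    rintro ⟨w, hwG3⟩ hmem
    have hwW : w ∈ W := hmem
    have hwRb : w ∈ Rb := ((Submodule.mem_inf).mp hwW).2
    obtain ⟨r, hr, rfl⟩ := Submodule.mem_map.mp hwRb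
    have he : (mkJ.toLinearMap r : F ⧸ J) = mkJ r := rfl
    rw [LinearMap.mem_ker]
    show Φ (mkJ.toLinearMap r) = 0
    rw [he, hΦapply]
    rw [hRcE xe r hr, hRcE ye r hr]
    rfl
  have hkerW : finrank K W ≤ finrank K (LinearMap.ker Φ3) := by
    have he := (Submodule.comapSubtypeEquivOfLe (inf_le_left : W ≤ G3)).finrank_eq
    have h1 : Submodule.comap G3.subtype W = Submodule.comap G3.subtype (W ⊓ G3) := by
      rw [inf_eq_left.mpr (inf_le_left : W ≤ G3)]
    have h2 : finrank K (Submodule.comap G3.subtype W) = finrank K W := by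
      have := (Submodule.comapSubtypeEquivOfLe (inf_le_left : W ≤ G3)).finrank_eq
      exact this
    rw [← h2]
    exact Submodule.finrank_mono hWker
  have hrange1 : finrank K (LinearMap.range Φ3) ≤ 1 := by omega
  -- the two vectors in the range
  have haeG3 : ae ∈ G3 := hmemG3 A hA2
  have hbeG3 : be ∈ G3 := hmemG3 B hB2
  set v1 : (F ⧸ J) × (F ⧸ J) := (e1, e2) with hv1
  set v2 : (F ⧸ J) × (F ⧸ J) := (e2, e3) with hv2
  have hv1r : v1 ∈ LinearMap.range Φ3 := by
    refine ⟨⟨ae, haeG3⟩, ?_⟩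
    show Φ ae = v1
    rw [hΦapply, hlie_xA, hlie_yA]
  have hv2r : v2 ∈ LinearMap.range Φ3 := by
    refine ⟨⟨be, hbeG3⟩, ?_⟩
    show Φ be = v2
    rw [hΦapply, hJac, hlie_yB]
  have hdep : ¬ LinearIndependent K ![v1, v2] := by
    intro hind
    have hind' : LinearIndependent K
        (fun i => (![(⟨v1, hv1r⟩ : LinearMap.range Φ3), ⟨v2, hv2r⟩] i : (F ⧸ J) × (F ⧸ J))) := by
      have he : (fun i => (![(⟨v1, hv1r⟩ : LinearMap.range Φ3), ⟨v2, hv2r⟩] i :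
          (F ⧸ J) × (F ⧸ J))) = ![v1, v2] := by
        funext i
        fin_cases i <;> rfl
      rw [he]
      exact hind
    have hind2 : LinearIndependent K ![(⟨v1, hv1r⟩ : LinearMap.range Φ3), ⟨v2, hv2r⟩] :=
      LinearIndependent.of_comp (LinearMap.range Φ3).subtype hind'
    have hcard := hind2.fintype_card_le_finrank
    simp only [Fintype.card_fin] at hcard
    omega
  rw [LinearIndependent.pair_iff] at hdep
  push_neg at hdep
  obtain ⟨s, t, hst, hne⟩ := hdep
  have hst1 : s • e1 + t • e2 = 0 := by
    have := congrArg Prod.fst hst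
    simpa using this
  have hst2 : s • e2 + t • e3 = 0 := by
    have := congrArg Prod.snd hst
    simpa using this
  -- S4 is contained in a line
  have hS4line : ∃ v0 : F ⧸ J, S4 ≤ (K ∙ v0) := by
    rcases eq_or_ne s 0 with rfl | hs
    · have ht : t ≠ 0 := by
        intro h
        exact hne rfl h
      rw [zero_smul, zero_add] at hst1 hst2
      have he2 : e2 = 0 := by
        rcases smul_eq_zero.mp hst1 with h | h
        · exact absurd h ht
        · exact h
      have he3 : e3 = 0 := by
        rcases smul_eq_zero.mp hst2 with h | h
        · exact absurd h ht
        · exact h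
      refine ⟨e1, ?_⟩
      rw [hS4, Submodule.span_le]
      intro v hv
      simp only [Set.mem_insert_iff, Set.mem_singleton_iff] at hv
      rcases hv with rfl | rfl | rfl
      · exact Submodule.mem_span_singleton_self _
      · rw [he2]; exact Submodule.zero_mem _
      · rw [he3]; exact Submodule.zero_mem _
    · set cc : K := -(s⁻¹ * t) with hcc
      have he1 : e1 = cc • e2 := by
        have h1 : s • e1 = -(t • e2) := eq_neg_of_add_eq_zero_left hst1
        have h2 : s⁻¹ • (s • e1) = s⁻¹ • -(t • e2) := congrArg (fun w => s⁻¹ • w) h1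
        rw [smul_smul, inv_mul_cancel₀ hs, one_smul, smul_neg, smul_smul] at h2
        rw [h2, hcc, neg_smul]
      have he2 : e2 = cc • e3 := by
        have h1 : s • e2 = -(t • e3) := eq_neg_of_add_eq_zero_left hst2
        have h2 : s⁻¹ • (s • e2) = s⁻¹ • -(t • e3) := congrArg (fun w => s⁻¹ • w) h1
        rw [smul_smul, inv_mul_cancel₀ hs, one_smul, smul_neg, smul_smul] at h2
        rw [h2, hcc, neg_smul]
      refine ⟨e3, ?_⟩
      rw [hS4, Submodule.span_le]
      intro v hv
      simp only [Set.mem_insert_iff, Set.mem_singleton_iff] at hv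
      rcases hv with rfl | rfl | rfl
      · rw [he1, he2]
        exact Submodule.smul_mem _ _ (Submodule.smul_mem _ _
          (Submodule.mem_span_singleton_self _))
      · rw [he2]
        exact Submodule.smul_mem _ _ (Submodule.mem_span_singleton_self _)
      · exact Submodule.mem_span_singleton_self _
  obtain ⟨v0, hS4v0⟩ := hS4line
  -- final dimension count
  have hG3small : finrank K G3 ≤ 3 := by
    have hle : G3 ≤ (K ∙ ae) ⊔ (K ∙ be) ⊔ (K ∙ v0) := by
      refine le_trans hG3le ?_
      rw [hS3]
      exact sup_le_sup le_rfl (le_trans hG4le hS4v0)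
    have h1 : finrank K G3 ≤ finrank K ↥((K ∙ ae) ⊔ (K ∙ be) ⊔ (K ∙ v0)) :=
      Submodule.finrank_mono hle
    have h2 : finrank K ↥((K ∙ ae) ⊔ (K ∙ be) ⊔ (K ∙ v0)) ≤
        finrank K ↥((K ∙ ae) ⊔ (K ∙ be)) + finrank K ↥(K ∙ v0) :=
      Submodule.finrank_add_le_finrank_add_finrank _ _
    have h3 : finrank K ↥((K ∙ ae) ⊔ (K ∙ be)) ≤
        finrank K ↥(K ∙ ae) + finrank K ↥(K ∙ be) :=
      Submodule.finrank_add_le_finrank_add_finrank _ _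
    have h4 := hrank1 (F ⧸ J) inferInstance inferInstance ae
    have h5 := hrank1 (F ⧸ J) inferInstance inferInstance be
    have h6 := hrank1 (F ⧸ J) inferInstance inferInstance v0
    omega
  omega
end AuxBase


section AuxMain
open LieModule Function Module

theorem aux_main (K : Type) [Field K] : ∀ n : ℕ,
    ∀ (L : Type) [LieRing L] [LieAlgebra K L] [FiniteDimensional K L],
    (∃ c, lowerCentralSeries K L L c = ⊥) →
    Module.finrank K L = n → 4 ≤ n →
    Module.finrank K (LieSubmodule.toSubmodule (lowerCentralSeries K L L 1)) = n - 2 →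
    ∀ (F : Type) [LieRing F] [LieAlgebra K F] (π : F →ₗ⁅K⁆ L),
      Function.Surjective π → auxHopfDim K π ≤ n - 2 := by
  intro n
  induction n using Nat.strong_induction_on with
  | _ n ih =>
    intro L _ _ _ hnil hn hn4 hm F _ _ π hπ
    rcases eq_or_lt_of_le hn4 with heq | hlt
    · -- base case n = 4
      subst heq
      exact aux_base4 hnil hn hm π hπ
    · -- inductive step, n ≥ 5
      by_contra hcon
      push_neg at hcon
      obtain ⟨c, hc⟩ := hnil
      classical
      have hex : ∃ k, lowerCentralSeries K L L k = ⊥ := ⟨c, hc⟩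
      set c₀ := Nat.find hex with hc₀def
      have hc₀ : lowerCentralSeries K L L c₀ = ⊥ := Nat.find_spec hex
      have hP0 : lowerCentralSeries K L L 0 ≠ ⊥ := by
        intro h
        rw [LieModule.lowerCentralSeries_zero] at h
        have h2 : (⊤ : Submodule K L) = ⊥ := by
          have := congrArg LieSubmodule.toSubmodule h
          rwa [LieSubmodule.top_toSubmodule, LieSubmodule.bot_toSubmodule] at this
        have h3 : finrank K L = 0 := by
          rw [← finrank_top, h2, finrank_bot]
        omega
      have hP1 : lowerCentralSeries K L L 1 ≠ ⊥ := by
        intro h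
        rw [h, LieSubmodule.bot_toSubmodule, finrank_bot] at hm
        omega
      have hc₀2 : 2 ≤ c₀ := by
        by_contra h
        push_neg at h
        interval_cases c₀
        · exact hP0 hc₀
        · exact hP1 hc₀
      have hprev : lowerCentralSeries K L L (c₀ - 1) ≠ ⊥ :=
        Nat.find_min hex (by omega)
      have hprev' : LieSubmodule.toSubmodule (lowerCentralSeries K L L (c₀ - 1)) ≠ ⊥ := by
        intro h
        apply hprev
        rw [← LieSubmodule.toSubmodule_inj, h, LieSubmodule.bot_toSubmodule]
      obtain ⟨z, hz, hz0⟩ := Submodule.exists_mem_ne_zero_of_ne_bot hprev'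
      have hzmem : z ∈ lowerCentralSeries K L L (c₀ - 1) := hz
      have hzc : ∀ w : L, ⁅w, z⁆ = 0 := by
        intro w
        have h1 : ⁅w, z⁆ ∈ lowerCentralSeries K L L c₀ := by
          rw [show c₀ = (c₀ - 1) + 1 by omega, LieModule.lowerCentralSeries_succ]
          exact LieSubmodule.lie_mem_lie (LieSubmodule.mem_top w) hzmem
        rw [hc₀] at h1
        exact (LieSubmodule.mem_bot _).mp h1
      have hz2 : z ∈ lowerCentralSeries K L L 1 :=
        antitone_lowerCentralSeries K L L (by omega) hzmem
      have hquot : finrank K (L ⧸ (lowerCentralSeries K L L 1 : LieIdeal K L)) = 2 := by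
        have h := Submodule.finrank_quotient_add_finrank
          (LieSubmodule.toSubmodule (lowerCentralSeries K L L 1))
        have e : finrank K (L ⧸ (lowerCentralSeries K L L 1 : LieIdeal K L))
            = finrank K (L ⧸ LieSubmodule.toSubmodule (lowerCentralSeries K L L 1)) := rfl
        omega
      obtain ⟨a, b, hab⟩ := aux_gen_pair (K := K) L hquot
      have hstep := aux_step π hπ z hz0 hzc hz2 a b hab
      set Z : LieIdeal K L := auxCentralIdeal K z hzc with hZ
      set π' : F →ₗ⁅K⁆ L ⧸ Z := (auxQuotLieHom K Z).comp π with hπ'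
      have hsurj' : Surjective π' := (auxQuotLieHom_surj K Z).comp hπ
      haveI : FiniteDimensional K (L ⧸ Z) := Module.Finite.quotient K _
      have hZfin : finrank K (LieSubmodule.toSubmodule Z) = 1 := by
        rw [hZ, auxCentralIdeal_coe]
        exact finrank_span_singleton hz0
      have hrankL' : finrank K (L ⧸ Z) = n - 1 := by
        have h := Submodule.finrank_quotient_add_finrank (LieSubmodule.toSubmodule Z)
        have e : finrank K (L ⧸ Z) = finrank K (L ⧸ LieSubmodule.toSubmodule Z) := rfl
        omega
      have hnil' : ∃ c', lowerCentralSeries K (L ⧸ Z) (L ⧸ Z) c' = ⊥ := by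
        refine ⟨c, ?_⟩
        have h := aux_lcs_map (auxQuotLieHom K Z) (auxQuotLieHom_surj K Z) c
        rw [hc, LieSubmodule.bot_toSubmodule, Submodule.map_bot] at h
        rw [← LieSubmodule.toSubmodule_inj, ← h, LieSubmodule.bot_toSubmodule]
      have hm' : finrank K
          (LieSubmodule.toSubmodule (lowerCentralSeries K (L ⧸ Z) (L ⧸ Z) 1))
            = (n - 1) - 2 := by
        have h := aux_lcs_map (auxQuotLieHom K Z) (auxQuotLieHom_surj K Z) 1
        have h2 := aux_finrank_map_add (auxQuotLieHom K Z).toLinearMap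
          (LieSubmodule.toSubmodule (lowerCentralSeries K L L 1))
        have hker : LinearMap.ker (auxQuotLieHom K Z).toLinearMap
            = LieSubmodule.toSubmodule Z := Submodule.ker_mkQ _
        rw [hker] at h2
        have hZle : LieSubmodule.toSubmodule Z
            ≤ LieSubmodule.toSubmodule (lowerCentralSeries K L L 1) := by
          rw [hZ, auxCentralIdeal_coe, Submodule.span_le, Set.singleton_subset_iff]
          exact hz2
        rw [inf_eq_right.mpr hZle] at h2
        rw [h] at h2
        omega
      have hbound := ih (n - 1) (by omega) (L ⧸ Z) hnil' hrankL' (by omega) hm' F π' hsurj'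
      omega

end AuxMain


/-- there is no `n`-dimensional nilpotent Lie algebra (`n ≥ 4`) with
`dim L² = n − 2` whose Schur multiplier attains Rai's bound, i.e. with
`dim M(L) = n − 1`. -/
theorem no_attaining_bound_of_derived_codim_two (K L : Type) [Field K] [LieRing L]
    [LieAlgebra K L] [FiniteDimensional K L] (n c : ℕ) (hn4 : 4 ≤ n)
    (hn : Module.finrank K L = n) (hm : lieDerivedDim K L = n - 2)
    (hc : lieNilpotencyClass K L c)
    (hM : ∃ (X : Type) (π : FreeLieAlgebra K X →ₗ⁅K⁆ L), Function.Surjective π ∧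
      lieSchurMultiplierDim K X π = n - 1) :
    False := by
  obtain ⟨X, π, hπ, hdim⟩ := hM
  have h1 : lieSchurMultiplierDim K X π = auxHopfDim K π := aux_hopf_eq K π
  have h2 := aux_main K n L ⟨c, hc.1⟩ hn hn4 hm (FreeLieAlgebra K X) π hπ
  rw [h1] at hdim
  omega
end AuxUtil
end
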